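/- arXiv:1311.4860 — 8 statements merged into one kernel-verified Lean document; each statement's English description precedes it below -/
import Mathlib

section
/- Let φ satisfy Properties 1 and 2, let T₁,…,T_m be nonempty subsets of ℝ², and let the initial multiset be {φ(T₁),…,φ(T_m)}. If C and C' are multisets of subsets of ℝ² that are both reachable from the initial multiset under the reflexive–transitive closure of the merge-step relation, and both C and C' are terminal (their elements are pairwise disjoint, counting multiplicity), then C = C'. (The φ-cover is well-defined.) -/
/-- The merge-step relation on multisets of subsets of ℝ². -/
def MergeStep (φ : Set (ℝ × ℝ) → Set (ℝ × ℝ))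
    (C C' : Multiset (Set (ℝ × ℝ))) : Prop :=
  ∃ (A B : Set (ℝ × ℝ)) (rest : Multiset (Set (ℝ × ℝ))),
    C = A ::ₘ B ::ₘ rest ∧ A ∩ B ≠ ∅ ∧ C' = φ (φ A ∪ φ B) ::ₘ rest

section Aux

variable (φ : Set (ℝ × ℝ) → Set (ℝ × ℝ))
  (h1 : ∀ A : Set (ℝ × ℝ), A ⊆ φ A)
  (h2 : ∀ A B : Set (ℝ × ℝ), A ⊆ φ B → φ A ⊆ φ B)

include h1 h2

theorem phi_mono {X Y : Set (ℝ × ℝ)} (h : X ⊆ Y) : φ X ⊆ φ Y :=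
  h2 _ _ (h.trans (h1 Y))

theorem phi_union_left (X Y : Set (ℝ × ℝ)) : φ (φ X ∪ Y) = φ (X ∪ Y) := by
  apply subset_antisymm
  · exact h2 _ _ (Set.union_subset
      (phi_mono φ h1 h2 Set.subset_union_left)
      (Set.subset_union_right.trans (h1 _)))
  · exact phi_mono φ h1 h2 (Set.union_subset_union_left _ (h1 X))

theorem merge_eq (X Y : Set (ℝ × ℝ)) : φ (φ X ∪ φ Y) = φ (X ∪ Y) := by
  rw [phi_union_left φ h1 h2, Set.union_comm X, phi_union_left φ h1 h2,
    Set.union_comm Y]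

theorem step_merge {P Q : Set (ℝ × ℝ)} (rest : Multiset (Set (ℝ × ℝ)))
    (h : (P ∩ Q).Nonempty) :
    MergeStep φ (P ::ₘ Q ::ₘ rest) (φ (P ∪ Q) ::ₘ rest) :=
  ⟨P, Q, rest, rfl, h.ne_empty, by rw [merge_eq φ h1 h2]⟩

theorem join_overlap {A B Z S : Set (ℝ × ℝ)} (ds : Multiset (Set (ℝ × ℝ)))
    (hZ : ((A ∪ B) ∩ Z).Nonempty) (hS : A ∪ B ∪ Z = S) :
    MergeStep φ (φ (A ∪ B) ::ₘ Z ::ₘ ds) (φ S ::ₘ ds) := by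
  subst hS
  have hne : (φ (A ∪ B) ∩ Z).Nonempty := by
    obtain ⟨x, hx1, hx2⟩ := hZ
    exact ⟨x, h1 _ hx1, hx2⟩
  have := step_merge φ h1 h2 ds hne
  rwa [phi_union_left φ h1 h2] at this

theorem strong_confluence : ∀ a b c, MergeStep φ a b → MergeStep φ a c →
    ∃ d, Relation.ReflGen (MergeStep φ) b d ∧
      Relation.ReflTransGen (MergeStep φ) c d := by
  rintro a b c ⟨A, B, r1, rfl, hAB, rfl⟩ ⟨D, E, r2, heq, hDE, rfl⟩
  rw [← Set.nonempty_iff_ne_empty] at hAB hDE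
  simp only [merge_eq φ h1 h2]
  rcases Multiset.cons_eq_cons.mp heq with ⟨rfl, h⟩ | ⟨hne, cs, h₁, h₂⟩
  · rcases Multiset.cons_eq_cons.mp h with ⟨rfl, rfl⟩ | ⟨hne2, ds, rfl, rfl⟩
    · exact ⟨_, .refl, .refl⟩
    · obtain ⟨x, hx1, hx2⟩ := hDE
      obtain ⟨y, hy1, hy2⟩ := hAB
      exact ⟨φ (A ∪ B ∪ E) ::ₘ ds,
        .single (join_overlap φ h1 h2 ds ⟨x, Or.inl hx1, hx2⟩ rfl),
        .single (join_overlap φ h1 h2 ds ⟨y, Or.inl hy1, hy2⟩ (by ac_rfl))⟩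
  · rcases Multiset.cons_eq_cons.mp h₁ with ⟨rfl, rfl⟩ | ⟨hne3, ds, rfl, rfl⟩
    · rcases Multiset.cons_eq_cons.mp h₂ with ⟨rfl, rfl⟩ | ⟨hne4, es, rfl, rfl⟩
      · exact ⟨_, .refl, by rw [Set.union_comm B E]⟩
      · obtain ⟨x, hx1, hx2⟩ := hDE
        obtain ⟨y, hy1, hy2⟩ := hAB
        exact ⟨φ (A ∪ B ∪ E) ::ₘ es,
          .single (join_overlap φ h1 h2 es ⟨x, Or.inr hx1, hx2⟩ rfl),
          .single (join_overlap φ h1 h2 es ⟨y, Or.inl hy2, hy1⟩ (by ac_rfl))⟩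
    · rcases Multiset.cons_eq_cons.mp h₂ with ⟨rfl, rfl⟩ | ⟨hne4, es, rfl, hcs⟩
      · obtain ⟨x, hx1, hx2⟩ := hDE
        obtain ⟨y, hy1, hy2⟩ := hAB
        exact ⟨φ (E ∪ B ∪ D) ::ₘ ds,
          .single (join_overlap φ h1 h2 ds ⟨x, Or.inl hx2, hx1⟩ rfl),
          .single (join_overlap φ h1 h2 ds ⟨y, Or.inr hy1, hy2⟩ (by ac_rfl))⟩
      · rcases Multiset.cons_eq_cons.mp hcs with ⟨rfl, rfl⟩ | ⟨hne5, fs, rfl, rfl⟩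
        · obtain ⟨x, hx1, hx2⟩ := hDE
          obtain ⟨y, hy1, hy2⟩ := hAB
          exact ⟨φ (A ∪ B ∪ D) ::ₘ ds,
            .single (join_overlap φ h1 h2 ds ⟨x, Or.inr hx2, hx1⟩ rfl),
            .single (join_overlap φ h1 h2 ds ⟨y, Or.inr hy2, hy1⟩ (by ac_rfl))⟩
        · refine ⟨φ (D ∪ E) ::ₘ φ (A ∪ B) ::ₘ fs, .single ?_, .single ?_⟩
          · have hb := step_merge φ h1 h2 (φ (A ∪ B) ::ₘ fs) hDE
            rwa [show D ::ₘ E ::ₘ φ (A ∪ B) ::ₘ fs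
                = φ (A ∪ B) ::ₘ D ::ₘ E ::ₘ fs from by
              rw [Multiset.cons_swap E, Multiset.cons_swap D]] at hb
          · have hc := step_merge φ h1 h2 (φ (D ∪ E) ::ₘ fs) hAB
            rwa [show A ::ₘ B ::ₘ φ (D ∪ E) ::ₘ fs
                = φ (D ∪ E) ::ₘ A ::ₘ B ::ₘ fs from by
              rw [Multiset.cons_swap B, Multiset.cons_swap A],
              Multiset.cons_swap (φ (A ∪ B)) (φ (D ∪ E))] at hc

omit h1 h2 in
theorem terminal_no_step {C X : Multiset (Set (ℝ × ℝ))}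
    (ht : C.Pairwise Disjoint) (h : MergeStep φ C X) : False := by
  obtain ⟨A, B, rest, rfl, hAB, -⟩ := h
  obtain ⟨l, hl, hp⟩ := ht
  have hperm : l.Perm (A :: B :: rest.toList) := by
    rw [← Multiset.coe_eq_coe, ← hl, ← Multiset.cons_coe, ← Multiset.cons_coe,
      Multiset.coe_toList]
  have hp2 : (A :: B :: rest.toList).Pairwise Disjoint :=
    (List.Perm.pairwise_iff (R := Disjoint) (fun h => Disjoint.symm h) hperm).mp hp
  exact hAB (Set.disjoint_iff_inter_eq_empty.mp
    ((List.pairwise_cons.mp hp2).1 B List.mem_cons_self))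

omit h1 h2 in
theorem terminal_eq {C D : Multiset (Set (ℝ × ℝ))}
    (ht : C.Pairwise Disjoint)
    (h : Relation.ReflTransGen (MergeStep φ) C D) : C = D := by
  rcases h.cases_head with rfl | ⟨b, hb, -⟩
  · rfl
  · exact absurd hb fun hb => terminal_no_step φ ht hb

end Aux

theorem phi_cover_well_defined
    (φ : Set (ℝ × ℝ) → Set (ℝ × ℝ))
    (h1 : ∀ A : Set (ℝ × ℝ), A ⊆ φ A)
    (h2 : ∀ A B : Set (ℝ × ℝ), A ⊆ φ B → φ A ⊆ φ B)
    (m : ℕ) (T : Fin m → Set (ℝ × ℝ)) (hT : ∀ i, (T i).Nonempty)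
    (C C' : Multiset (Set (ℝ × ℝ)))
    (hC : Relation.ReflTransGen (MergeStep φ)
      (Multiset.map (fun i => φ (T i)) Finset.univ.val) C)
    (hC' : Relation.ReflTransGen (MergeStep φ)
      (Multiset.map (fun i => φ (T i)) Finset.univ.val) C')
    (htC : C.Pairwise Disjoint) (htC' : C'.Pairwise Disjoint) :
    C = C' := by
  obtain ⟨D, hCD, hC'D⟩ :=
    Relation.church_rosser (strong_confluence φ h1 h2) hC hC'
  rw [terminal_eq φ htC hCD, terminal_eq φ htC' hC'D]
end

section
/- Let φ satisfy Properties 1 and 2, let T₁,…,T_m be nonempty subsets of ℝ², and let the initial multiset be {φ(T₁),…,φ(T_m)}. If C is any multiset reachable from the initial multiset under the reflexive–transitive closure of the merge-step relation, and C' is a terminal multiset reachable from the initial multiset, then for every element A of C there exists an element B of C' with A ⊆ B. -/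
theorem always_contained_in_terminal
    (φ : Set (ℝ × ℝ) → Set (ℝ × ℝ))
    (h1 : ∀ A : Set (ℝ × ℝ), A ⊆ φ A)
    (h2 : ∀ A B : Set (ℝ × ℝ), A ⊆ φ B → φ A ⊆ φ B)
    (m : ℕ) (T : Fin m → Set (ℝ × ℝ)) (hT : ∀ i, (T i).Nonempty)
    (C C' : Multiset (Set (ℝ × ℝ)))
    (hC : Relation.ReflTransGen (MergeStep φ)
      (Multiset.map (fun i => φ (T i)) Finset.univ.val) C)
    (hC' : Relation.ReflTransGen (MergeStep φ)
      (Multiset.map (fun i => φ (T i)) Finset.univ.val) C')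
    (htC' : C'.Pairwise Disjoint) :
    ∀ A ∈ C, ∃ B ∈ C', A ⊆ B := by
  have hidem : ∀ X, φ (φ X) = φ X := fun X =>
    Set.Subset.antisymm (h2 _ _ (subset_refl _)) (h1 _)
  set init : Multiset (Set (ℝ × ℝ)) :=
    Multiset.map (fun i => φ (T i)) Finset.univ.val with hinit
  -- every element of a reachable multiset is a φ-image
  have inv1 : ∀ D, Relation.ReflTransGen (MergeStep φ) init D →
      ∀ X ∈ D, ∃ Y, X = φ Y := by
    intro D hD
    induction hD with
    | refl =>
      intro X hX
      obtain ⟨i, _, rfl⟩ := Multiset.mem_map.mp hX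
      exact ⟨T i, rfl⟩
    | tail _ hstep ih =>
      obtain ⟨A, B, rest, rfl, _, rfl⟩ := hstep
      intro X hX
      rcases Multiset.mem_cons.mp hX with h | h
      · exact ⟨φ A ∪ φ B, h⟩
      · exact ih X (Multiset.mem_cons_of_mem (Multiset.mem_cons_of_mem h))
  -- each φ (T i) stays contained in some element
  have inv2 : ∀ D, Relation.ReflTransGen (MergeStep φ) init D →
      ∀ i, ∃ B ∈ D, φ (T i) ⊆ B := by
    intro D hD
    induction hD with
    | refl =>
      intro i
      exact ⟨φ (T i), Multiset.mem_map.mpr ⟨i, Finset.mem_univ i, rfl⟩, subset_refl _⟩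
    | tail _ hstep ih =>
      obtain ⟨A, B, rest, rfl, _, rfl⟩ := hstep
      intro i
      obtain ⟨B₀, hB₀mem, hB₀⟩ := ih i
      rcases Multiset.mem_cons.mp hB₀mem with h | h
      · subst h
        exact ⟨φ (φ B₀ ∪ φ B), Multiset.mem_cons_self _ _,
          hB₀.trans ((h1 B₀).trans ((Set.subset_union_left).trans (h1 _)))⟩
      · rcases Multiset.mem_cons.mp h with h | h
        · subst h
          exact ⟨φ (φ A ∪ φ B₀), Multiset.mem_cons_self _ _,
            hB₀.trans ((h1 B₀).trans ((Set.subset_union_right).trans (h1 _)))⟩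
        · exact ⟨B₀, Multiset.mem_cons_of_mem h, hB₀⟩
  -- in a terminal multiset, elements sharing a point are equal
  have hdisj : ∀ B₁ ∈ C', ∀ B₂ ∈ C', (B₁ ∩ B₂).Nonempty → B₁ = B₂ := by
    obtain ⟨l, hl, hp⟩ := htC'
    intro B₁ hB₁ B₂ hB₂ hne
    by_contra hne'
    have hd : Disjoint B₁ B₂ := by
      refine hp.forall ?_ ?_ hne'
      · rw [hl] at hB₁; exact Multiset.mem_coe.mp hB₁
      · rw [hl] at hB₂; exact Multiset.mem_coe.mp hB₂
    obtain ⟨x, hx₁, hx₂⟩ := hne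
    exact (Set.disjoint_left.mp hd hx₁) hx₂
  -- main induction along the run to C
  induction hC with
  | refl =>
    intro A hA
    obtain ⟨i, _, rfl⟩ := Multiset.mem_map.mp hA
    exact inv2 C' hC' i
  | tail hreach hstep ih =>
    obtain ⟨A, B, rest, rfl, hAB, rfl⟩ := hstep
    intro X hX
    rcases Multiset.mem_cons.mp hX with h | h
    · subst h
      obtain ⟨B₁, hB₁mem, hAB₁⟩ := ih A (Multiset.mem_cons_self _ _)
      obtain ⟨B₂, hB₂mem, hBB₂⟩ :=
        ih B (Multiset.mem_cons_of_mem (Multiset.mem_cons_self _ _))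
      have hne : (B₁ ∩ B₂).Nonempty := by
        obtain ⟨x, hx⟩ := Set.nonempty_iff_ne_empty.mpr hAB
        exact ⟨x, hAB₁ hx.1, hBB₂ hx.2⟩
      have heq : B₁ = B₂ := hdisj B₁ hB₁mem B₂ hB₂mem hne
      obtain ⟨Y, hY⟩ := inv1 C' hC' B₁ hB₁mem
      refine ⟨B₁, hB₁mem, ?_⟩
      have hA' : φ A ⊆ φ Y := h2 _ _ (hAB₁.trans_eq hY)
      have hB' : φ B ⊆ φ Y := h2 _ _ ((hBB₂.trans_eq heq.symm).trans_eq hY)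
      have : φ A ∪ φ B ⊆ φ Y := Set.union_subset hA' hB'
      calc φ (φ A ∪ φ B) ⊆ φ (φ Y) := h2 _ _ (this.trans (h1 _))
        _ = φ Y := hidem Y
        _ = B₁ := hY.symm
    · exact ih X (Multiset.mem_cons_of_mem (Multiset.mem_cons_of_mem h))
end

section
/- Let s and t be nonempty finite subsets of ℝ² with s ∩ t = ∅ such that no three distinct points of s ∪ t are collinear, and let P = convexHull ℝ s and Q = convexHull ℝ t. If P and Q are weakly disjoint (i.e., P \ Q and Q \ P are both preconnected), then the set (frontier P) ∩ (frontier Q) has at most two points (its extended cardinality is at most 2). -/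
open Set

/-- A nonzero linear functional on `ℝ × ℝ` has 1-dimensional kernel: two kernel vectors
with the first nonzero are parallel. -/
lemma wd_ker_par (g : (ℝ × ℝ) →L[ℝ] ℝ) (hg : ∃ p, g p ≠ 0) {d1 d2 : ℝ × ℝ}
    (h1 : g d1 = 0) (h2 : g d2 = 0) (hd1 : d1 ≠ 0) : ∃ r : ℝ, d2 = r • d1 := by
  have expand : ∀ v : ℝ × ℝ, g v = v.1 * g (1, 0) + v.2 * g (0, 1) := by
    intro v
    have hv : v = v.1 • ((1 : ℝ), (0 : ℝ)) + v.2 • ((0 : ℝ), (1 : ℝ)) := by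
      ext <;> simp
    calc g v = g (v.1 • ((1 : ℝ), (0 : ℝ)) + v.2 • ((0 : ℝ), (1 : ℝ))) := by rw [← hv]
    _ = v.1 * g (1, 0) + v.2 * g (0, 1) := by
        rw [map_add, map_smul, map_smul]; simp [smul_eq_mul]
  set α := g (1, 0) with hα
  set β := g (0, 1) with hβ
  have e1 : d1.1 * α + d1.2 * β = 0 := by rw [← expand]; exact h1
  have e2 : d2.1 * α + d2.2 * β = 0 := by rw [← expand]; exact h2
  have hαβ : α ≠ 0 ∨ β ≠ 0 := by
    by_contra h
    push_neg at h
    obtain ⟨p, hp⟩ := hg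
    exact hp (by rw [expand p, h.1, h.2]; ring)
  have hdet : d1.1 * d2.2 - d2.1 * d1.2 = 0 := by
    rcases hαβ with hα0 | hβ0
    · have : (d1.1 * d2.2 - d2.1 * d1.2) * α = 0 := by linear_combination d2.2 * e1 - d1.2 * e2
      exact (mul_eq_zero.1 this).resolve_right hα0
    · have : (d1.1 * d2.2 - d2.1 * d1.2) * β = 0 := by linear_combination d1.1 * e2 - d2.1 * e1
      exact (mul_eq_zero.1 this).resolve_right hβ0
  rcases eq_or_ne d1.1 0 with h11 | h11
  · have h12 : d1.2 ≠ 0 := by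
      intro h12
      exact hd1 (Prod.ext h11 h12)
    refine ⟨d2.2 / d1.2, ?_⟩
    have : d2.1 = d2.2 / d1.2 * d1.1 := by
      field_simp
      nlinarith [hdet]
    ext
    · simpa using this
    · simp [Prod.smul_def, smul_eq_mul]
      field_simp
  · refine ⟨d2.1 / d1.1, ?_⟩
    have : d2.2 = d2.1 / d1.1 * d1.2 := by
      field_simp
      nlinarith [hdet]
    ext
    · simp [Prod.smul_def, smul_eq_mul]; field_simp
    · simpa using this

/-- Three points on a level set of a nontrivial linear functional on the plane are collinear. -/
lemma wd_level_collinear (g : (ℝ × ℝ) →L[ℝ] ℝ) (hg : ∃ p, g p ≠ 0) {a b c : ℝ × ℝ} {l : ℝ}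
    (ha : g a = l) (hb : g b = l) (hc : g c = l) : Collinear ℝ ({a, b, c} : Set (ℝ × ℝ)) := by
  rcases eq_or_ne b a with rfl | hba
  · refine (collinear_pair ℝ b c).subset ?_
    intro x hx
    simp only [Set.mem_insert_iff, Set.mem_singleton_iff] at hx ⊢
    tauto
  · have h1 : g (b - a) = 0 := by rw [map_sub, ha, hb, sub_self]
    have h2 : g (c - a) = 0 := by rw [map_sub, ha, hc, sub_self]
    obtain ⟨r, hr⟩ := wd_ker_par g hg h1 h2 (sub_ne_zero.2 hba)
    rw [collinear_iff_of_mem (Set.mem_insert a _)]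
    refine ⟨b - a, ?_⟩
    intro p hp
    simp only [Set.mem_insert_iff, Set.mem_singleton_iff] at hp
    rcases hp with rfl | rfl | rfl
    · exact ⟨0, by simp⟩
    · exact ⟨1, by simp⟩
    · exact ⟨r, by rw [← hr]; simp⟩

/-- Supporting functional and edge at a boundary point of a polygon in general position. -/
lemma wd_face (s : Finset (ℝ × ℝ))
    (hcol : ∀ p q r : ℝ × ℝ, p ∈ (s : Set (ℝ × ℝ)) → q ∈ (s : Set (ℝ × ℝ)) →
      r ∈ (s : Set (ℝ × ℝ)) → p ≠ q → q ≠ r → p ≠ r → ¬ Collinear ℝ ({p, q, r} : Set (ℝ × ℝ)))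
    {x : ℝ × ℝ} (hx : x ∈ frontier (convexHull ℝ (s : Set (ℝ × ℝ))))
    (hint : (interior (convexHull ℝ (s : Set (ℝ × ℝ)))).Nonempty) :
    ∃ (f : (ℝ × ℝ) →L[ℝ] ℝ) (u v : ℝ × ℝ), u ∈ s ∧ v ∈ s ∧
      (∀ a ∈ convexHull ℝ (s : Set (ℝ × ℝ)), f a ≤ f x) ∧
      (∀ a ∈ interior (convexHull ℝ (s : Set (ℝ × ℝ))), f a < f x) ∧
      (∀ y ∈ convexHull ℝ (s : Set (ℝ × ℝ)), f y = f x → y ∈ segment ℝ u v) ∧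
      f u = f x ∧ f v = f x := by
  set P := convexHull ℝ (s : Set (ℝ × ℝ)) with hPdef
  have hPc : IsClosed P := (s.finite_toSet.isCompact_convexHull ℝ).isClosed
  have hconv : Convex ℝ P := convex_convexHull ℝ _
  have hxP : x ∈ P := hPc.frontier_subset hx
  have hxni : x ∉ interior P := by
    exact fun h => Set.disjoint_left.1 disjoint_interior_frontier h hx
  obtain ⟨f, hf⟩ := geometric_hahn_banach_open_point hconv.interior isOpen_interior hxni
  obtain ⟨o0, ho0⟩ := hint
  -- weak inequality on all of P
  have hle : ∀ a ∈ P, f a ≤ f x := by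
    intro a ha
    have htd : Filter.Tendsto (fun l : ℝ => f ((1 - l) • a + l • o0)) (nhdsWithin 0 (Set.Ioi 0))
        (nhds (f a)) := by
      have hc : Continuous (fun l : ℝ => f ((1 - l) • a + l • o0)) := by fun_prop
      have := hc.tendsto 0
      simp only [sub_zero, one_smul, zero_smul, add_zero] at this
      exact this.mono_left nhdsWithin_le_nhds
    refine le_of_tendsto htd ?_
    filter_upwards [Ioo_mem_nhdsGT_of_mem (Set.left_mem_Ico.2 one_pos)] with l hl
    have hmem : (1 - l) • a + l • o0 ∈ interior P := by
      have := hconv.combo_self_interior_mem_interior ha ho0 (by linarith [hl.2] : (0:ℝ) ≤ 1 - l)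
        hl.1 (by ring)
      exact this
    exact (hf _ hmem).le
  -- the extreme face is the hull of the level points of s
  set c := f x with hc
  set F : Finset (ℝ × ℝ) := s.filter (fun a => f a = c) with hF
  have hkey : ∀ y ∈ P, f y = c → y ∈ convexHull ℝ (F : Set (ℝ × ℝ)) := by
    intro y hy hyc
    rw [hPdef, Finset.convexHull_eq] at hy
    obtain ⟨w, hw0, hw1, hwy⟩ := hy
    rw [Finset.centerMass_eq_of_sum_1 _ _ hw1] at hwy
    have hfy : ∑ i ∈ s, w i * f i = c := by
      rw [← hyc, ← hwy, map_sum]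
      simp [map_smul, smul_eq_mul]
    have hall : ∀ i ∈ s, w i ≠ 0 → f i = c := by
      by_contra hcon
      push_neg at hcon
      obtain ⟨i0, hi0s, hi0w, hi0f⟩ := hcon
      have hi0lt : f i0 < c := lt_of_le_of_ne (hle i0 (subset_convexHull ℝ _ hi0s)) hi0f
      have hstrict : ∑ i ∈ s, w i * f i < ∑ i ∈ s, w i * c := by
        refine Finset.sum_lt_sum (fun i hi => ?_) ⟨i0, hi0s, ?_⟩
        · exact mul_le_mul_of_nonneg_left (hle i (subset_convexHull ℝ _ hi)) (hw0 i hi)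
        · exact mul_lt_mul_of_pos_left hi0lt (lt_of_le_of_ne (hw0 i0 hi0s) (Ne.symm hi0w))
      rw [← Finset.sum_mul, hw1, one_mul, hfy] at hstrict
      exact lt_irrefl c hstrict
    have hFs : F ⊆ s := Finset.filter_subset _ _
    have hzero : ∀ i ∈ s, i ∉ F → w i = 0 := by
      intro i hi hiF
      by_contra hwi
      exact hiF (Finset.mem_filter.2 ⟨hi, hall i hi hwi⟩)
    rw [Finset.convexHull_eq]
    refine ⟨w, fun i hi => hw0 i (hFs hi), ?_, ?_⟩
    · rw [Finset.sum_subset hFs (fun i hi hiF => hzero i hi hiF)]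
      exact hw1
    · rw [Finset.centerMass_eq_of_sum_1]
      · rw [← hwy]
        exact Finset.sum_subset hFs (fun i hi hiF => by rw [hzero i hi hiF, zero_smul])
      · rw [Finset.sum_subset hFs (fun i hi hiF => hzero i hi hiF)]
        exact hw1
  -- F has at most two elements
  have hgne : ∃ p, f p ≠ 0 := by
    refine ⟨x - o0, ?_⟩
    rw [map_sub]
    have := hf o0 ho0
    intro h
    rw [sub_eq_zero] at h
    exact absurd h.symm (ne_of_lt this)
  have hcard : F.card ≤ 2 := by
    by_contra hgt
    push_neg at hgt
    obtain ⟨a, b, d, haF, hbF, hdF, hab, had, hbd⟩ := Finset.two_lt_card_iff.1 hgt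
    have hfa := (Finset.mem_filter.1 haF).2
    have hfb := (Finset.mem_filter.1 hbF).2
    have hfd := (Finset.mem_filter.1 hdF).2
    exact hcol a b d (Finset.mem_coe.2 (Finset.mem_filter.1 haF).1)
      (Finset.mem_coe.2 (Finset.mem_filter.1 hbF).1)
      (Finset.mem_coe.2 (Finset.mem_filter.1 hdF).1) hab hbd had
      (wd_level_collinear f hgne hfa hfb hfd)
  -- extract u, v
  have hFne : F.Nonempty := by
    have := hkey x hxP rfl
    rcases Finset.eq_empty_or_nonempty F with hFe | hFne
    · rw [hFe] at this
      simp at this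
    · exact hFne
  have h12 : F.card = 1 ∨ F.card = 2 := by
    have h1 : 1 ≤ F.card := Finset.card_pos.2 hFne
    omega
  have hmemF : ∀ i ∈ F, i ∈ s ∧ f i = c := fun i hi =>
    ⟨(Finset.mem_filter.1 hi).1, (Finset.mem_filter.1 hi).2⟩
  rcases h12 with h1 | h2
  · obtain ⟨u, hu⟩ := Finset.card_eq_one.1 h1
    have huF : u ∈ F := by rw [hu]; exact Finset.mem_singleton_self u
    refine ⟨f, u, u, (hmemF u huF).1, (hmemF u huF).1, hle, hf, ?_, (hmemF u huF).2,
      (hmemF u huF).2⟩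
    intro y hy hyc
    have := hkey y hy hyc
    rw [hu] at this
    simp only [Finset.coe_singleton, convexHull_singleton, Set.mem_singleton_iff] at this
    rw [this, segment_same]
    exact Set.mem_singleton u
  · obtain ⟨u, v, huv, huvF⟩ := Finset.card_eq_two.1 h2
    have huF : u ∈ F := by rw [huvF]; simp
    have hvF : v ∈ F := by rw [huvF]; simp
    refine ⟨f, u, v, (hmemF u huF).1, (hmemF v hvF).1, hle, hf, ?_, (hmemF u huF).2,
      (hmemF v hvF).2⟩
    intro y hy hyc
    have := hkey y hy hyc
    rw [huvF] at this
    have hco : ((({u, v} : Finset (ℝ × ℝ)) : Set (ℝ × ℝ))) = ({u, v} : Set (ℝ × ℝ)) := by simp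
    rw [hco, convexHull_pair] at this
    exact this

lemma wd_finrank_plane : Module.finrank ℝ (ℝ × ℝ) = 2 := by
  simp [Module.finrank_prod]

/-- If the hull of a finite general-position set has empty interior, it is a segment
between two of its points. -/
lemma wd_seg (s : Finset (ℝ × ℝ)) (hs : s.Nonempty)
    (hcol : ∀ p q r : ℝ × ℝ, p ∈ (s : Set (ℝ × ℝ)) → q ∈ (s : Set (ℝ × ℝ)) →
      r ∈ (s : Set (ℝ × ℝ)) → p ≠ q → q ≠ r → p ≠ r → ¬ Collinear ℝ ({p, q, r} : Set (ℝ × ℝ)))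
    (hint : interior (convexHull ℝ (s : Set (ℝ × ℝ))) = ∅) :
    ∃ u v : ℝ × ℝ, u ∈ s ∧ v ∈ s ∧ convexHull ℝ (s : Set (ℝ × ℝ)) = segment ℝ u v := by
  have hns : (s : Set (ℝ × ℝ)).Nonempty := hs.to_set
  haveI : FiniteDimensional ℝ (vectorSpan ℝ (s : Set (ℝ × ℝ))) :=
    finiteDimensional_vectorSpan_of_finite ℝ s.finite_toSet
  have hcolS : Collinear ℝ (s : Set (ℝ × ℝ)) := by
    rw [collinear_iff_finrank_le_one]
    by_contra hgt
    push_neg at hgt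
    have htop : vectorSpan ℝ (s : Set (ℝ × ℝ)) = ⊤ := by
      apply Submodule.eq_top_of_finrank_eq
      have hle : Module.finrank ℝ (vectorSpan ℝ (s : Set (ℝ × ℝ))) ≤ 2 := by
        rw [← wd_finrank_plane]
        exact Submodule.finrank_le _
      rw [wd_finrank_plane]
      omega
    have hspan : affineSpan ℝ (s : Set (ℝ × ℝ)) = ⊤ :=
      (AffineSubspace.affineSpan_eq_top_iff_vectorSpan_eq_top_of_nonempty ℝ (ℝ × ℝ) (ℝ × ℝ) hns).2 htop
    have : (interior (convexHull ℝ (s : Set (ℝ × ℝ)))).Nonempty := by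
      rw [(convex_convexHull ℝ _).interior_nonempty_iff_affineSpan_eq_top]
      rw [affineSpan_convexHull]
      exact hspan
    rw [hint] at this
    exact this.ne_empty rfl
  have hcard : s.card ≤ 2 := by
    by_contra hgt
    push_neg at hgt
    obtain ⟨a, b, c, ha, hb, hc, hab, hac, hbc⟩ := Finset.two_lt_card_iff.1 hgt
    refine hcol a b c ha hb hc hab hbc hac (hcolS.subset ?_)
    intro x hx
    simp only [Set.mem_insert_iff, Set.mem_singleton_iff] at hx
    rcases hx with rfl | rfl | rfl <;> simpa
  have h12 : s.card = 1 ∨ s.card = 2 := by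
    have := Finset.card_pos.2 hs
    omega
  rcases h12 with h1 | h2
  · obtain ⟨u, hu⟩ := Finset.card_eq_one.1 h1
    refine ⟨u, u, by simp [hu], by simp [hu], ?_⟩
    rw [hu]
    simp only [Finset.coe_singleton, convexHull_singleton, segment_same]
  · obtain ⟨u, v, huv, huvs⟩ := Finset.card_eq_two.1 h2
    refine ⟨u, v, by simp [huvs], by simp [huvs], ?_⟩
    rw [huvs]
    have : ((({u, v} : Finset (ℝ × ℝ)) : Set (ℝ × ℝ))) = ({u, v} : Set (ℝ × ℝ)) := by simp
    rw [this, convexHull_pair]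

/-- An open-in-the-boundary preconnected subset of the boundary of a planar convex body
has at most two points in `closure A \ A`. -/
lemma wd_circ {P : Set (ℝ × ℝ)} (hPcl : IsClosed P) (hconv : Convex ℝ P) {o : ℝ × ℝ}
    (ho : o ∈ interior P) {A : Set (ℝ × ℝ)} (hA : A ⊆ frontier P) (hAconn : IsPreconnected A)
    {x1 x2 x3 : ℝ × ℝ} (h1 : x1 ∈ closure A \ A) (h2 : x2 ∈ closure A \ A)
    (h3 : x3 ∈ closure A \ A) (h12 : x1 ≠ x2) (h13 : x1 ≠ x3) (h23 : x2 ≠ x3) : False := by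
  have hclA : closure A ⊆ frontier P := closure_minimal hA isClosed_frontier
  have hx1f : x1 ∈ frontier P := hclA h1.1
  have hx2f : x2 ∈ frontier P := hclA h2.1
  have hx3f : x3 ∈ frontier P := hclA h3.1
  set ζ : (ℝ × ℝ) ≃L[ℝ] ℂ := Complex.equivRealProdCLM.symm with hζ
  set z : (ℝ × ℝ) → ℂ := fun y => ζ (y - o) with hzdef
  have hz0 : ∀ y ∈ frontier P, z y ≠ 0 := by
    intro y hy hzy
    have hyo : y - o = 0 := ζ.map_eq_zero_iff.1 hzy
    have hyeq : y = o := by rwa [sub_eq_zero] at hyo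
    exact Set.disjoint_left.1 disjoint_interior_frontier (hyeq ▸ ho) hy
  -- a ray from o meets the frontier at most once
  have ray : ∀ y1 ∈ frontier P, ∀ y2 ∈ frontier P, ∀ c : ℝ, 0 < c →
      y2 - o = c • (y1 - o) → y1 = y2 := by
    have key : ∀ y1 ∈ frontier P, ∀ y2 ∈ frontier P, ∀ c : ℝ, 0 < c → c < 1 →
        y2 - o = c • (y1 - o) → False := by
      intro y1 hy1 y2 hy2 c hc0 hc1 hceq
      have hy1P : y1 ∈ P := hPcl.frontier_subset hy1
      have hcomb : y2 = c • y1 + (1 - c) • o := by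
        have hy2e : y2 = (y2 - o) + o := by abel
        rw [hy2e, hceq]
        module
      have hy2int : y2 ∈ interior P := by
        rw [hcomb]
        exact hconv.combo_self_interior_mem_interior hy1P ho hc0.le (by linarith) (by ring)
      exact Set.disjoint_left.1 disjoint_interior_frontier hy2int hy2
    intro y1 hy1 y2 hy2 c hc0 hceq
    rcases lt_trichotomy c 1 with h | h | h
    · exact absurd hceq (fun hh => key y1 hy1 y2 hy2 c hc0 h hh)
    · rw [h, one_smul] at hceq
      exact (sub_left_inj.1 hceq).symm
    · have hrev : y1 - o = c⁻¹ • (y2 - o) := by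
        rw [hceq, smul_smul, inv_mul_cancel₀ (ne_of_gt hc0), one_smul]
      exact absurd hrev (fun hh =>
        key y2 hy2 y1 hy1 c⁻¹ (by positivity) (inv_lt_one_of_one_lt₀ h) hh)
  set u : (ℝ × ℝ) → ℂ := fun y => -(z y * (starRingEnd ℂ) (z x1)) with hudef
  have hcz : (starRingEnd ℂ) (z x1) ≠ 0 := by
    simpa using hz0 x1 hx1f
  have hu0 : ∀ y ∈ frontier P, u y ≠ 0 := by
    intro y hy
    exact neg_ne_zero.2 (mul_ne_zero (hz0 y hy) hcz)
  have hux1 : u x1 = -(Complex.normSq (z x1) : ℂ) := by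
    simp only [hudef]
    rw [Complex.mul_conj]
  have hux1re : (u x1).re = -Complex.normSq (z x1) := by rw [hux1]; simp
  have hux1im : (u x1).im = 0 := by rw [hux1]; simp
  have hnsq : 0 < Complex.normSq (z x1) := Complex.normSq_pos.2 (hz0 x1 hx1f)
  have hargx1 : Complex.arg (u x1) = Real.pi := by
    rw [Complex.arg_eq_pi_iff]
    constructor
    · rw [hux1re]; linarith
    · exact hux1im
  -- injectivity of the angle on the frontier
  have inj : ∀ y1 ∈ frontier P, ∀ y2 ∈ frontier P,
      Complex.arg (u y1) = Complex.arg (u y2) → y1 = y2 := by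
    intro y1 hy1 y2 hy2 harg
    have a1pos : 0 < ‖u y1‖ := norm_pos_iff.2 (hu0 y1 hy1)
    have a2pos : 0 < ‖u y2‖ := norm_pos_iff.2 (hu0 y2 hy2)
    have e1 := Complex.norm_mul_exp_arg_mul_I (u y1)
    have e2 := Complex.norm_mul_exp_arg_mul_I (u y2)
    rw [harg] at e1
    have hmul : u y1 * (‖u y2‖ : ℂ) = u y2 * (‖u y1‖ : ℂ) := by
      conv_lhs => rw [← e1]
      conv_rhs => rw [← e2]
      ring
    have hmul2 : -(z y1 * (starRingEnd ℂ) (z x1)) * (‖u y2‖ : ℂ) =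
        -(z y2 * (starRingEnd ℂ) (z x1)) * (‖u y1‖ : ℂ) := hmul
    have hzz : z y1 * (‖u y2‖ : ℂ) = z y2 * (‖u y1‖ : ℂ) := by
      apply mul_right_cancel₀ hcz
      linear_combination -hmul2
    set r : ℝ := ‖u y1‖ / ‖u y2‖ with hrdef
    have hr0 : 0 < r := div_pos a1pos a2pos
    have ha2c : ((‖u y2‖ : ℝ) : ℂ) ≠ 0 := by exact_mod_cast a2pos.ne'
    have hzr : z y1 = (r : ℝ) • z y2 := by
      rw [Complex.real_smul]
      show z y1 = ((‖u y1‖ / ‖u y2‖ : ℝ) : ℂ) * z y2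
      push_cast
      rw [div_mul_eq_mul_div, eq_div_iff ha2c]
      linear_combination hzz
    have hsub : y1 - o = r • (y2 - o) := by
      apply ζ.injective
      rw [map_smul]
      exact hzr
    exact (ray y2 hy2 y1 hy1 r hr0 hsub).symm
  -- continuity of u
  have hucont : Continuous u := by
    simp only [hudef, hzdef]
    fun_prop
  -- the angle map
  set θ : (ℝ × ℝ) → ℝ := fun y => Complex.arg (u y) with hθdef
  have hargne : ∀ y ∈ frontier P, y ≠ x1 → θ y ≠ Real.pi := by
    intro y hy hyne hpi
    exact hyne (inj y hy x1 hx1f (hpi.trans hargx1.symm))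
  have hslit : ∀ y ∈ frontier P, y ≠ x1 → u y ∈ Complex.slitPlane := by
    intro y hy hyne
    exact Complex.mem_slitPlane_iff_arg.2 ⟨hargne y hy hyne, hu0 y hy⟩
  have hθcont : ∀ y ∈ frontier P, y ≠ x1 → ContinuousAt θ y := by
    intro y hy hyne
    exact (Complex.continuousAt_arg (hslit y hy hyne)).comp hucont.continuousAt
  have hx1nA : x1 ∉ A := h1.2
  set I : Set ℝ := θ '' A with hIdef
  have hIconn : IsPreconnected I := by
    apply hAconn.image
    intro y hy
    have hyne : y ≠ x1 := fun h => hx1nA (h ▸ hy)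
    exact (hθcont y (hA hy) hyne).continuousWithinAt
  have hnotmem : ∀ w ∈ closure A \ A, θ w ∉ I := by
    rintro w hw ⟨a, haA, hae⟩
    have : a = w := inj a (hA haA) w (hclA hw.1) hae
    exact hw.2 (this ▸ haA)
  have hclmem : ∀ w ∈ closure A \ A, w ≠ x1 → θ w ∈ closure I := by
    intro w hw hwne
    exact ((hθcont w (hclA hw.1) hwne).continuousWithinAt).mem_closure_image hw.1
  -- each boundary-added point bounds I from one side
  have bd : ∀ w ∈ closure A \ A, (∀ a ∈ I, a ≤ θ w) ∨ (∀ a ∈ I, θ w ≤ a) := by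
    intro w hw
    by_contra hcon
    push_neg at hcon
    obtain ⟨⟨b, hbI, hbgt⟩, ⟨a, haI, hagt⟩⟩ := hcon
    have : θ w ∈ I := (hIconn.ordConnected).out haI hbI ⟨hagt.le, hbgt.le⟩
    exact hnotmem w hw this
  -- main contradiction given two-sided bounds strictly inside (-π, π)
  have main : ∀ lo hi : ℝ, |lo| < Real.pi → |hi| < Real.pi →
      (∀ a ∈ I, lo ≤ a) → (∀ a ∈ I, a ≤ hi) → False := by
    intro lo hi hlo hhi hlob hhib
    set M : ℝ := max |lo| |hi| with hMdef
    have hM0 : 0 ≤ M := le_trans (abs_nonneg lo) (le_max_left _ _)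
    have hMπ : M < Real.pi := max_lt hlo hhi
    have hsub : A ⊆ {y | Real.cos M * ‖u y‖ ≤ (u y).re} := by
      intro a haA
      have haf : a ∈ frontier P := hA haA
      have hanz : u a ≠ 0 := hu0 a haf
      have hIa : θ a ∈ I := Set.mem_image_of_mem θ haA
      have habs : |θ a| ≤ M := by
        rw [abs_le]
        constructor
        · have := hlob _ hIa
          have h2 : -M ≤ lo := by
            have : |lo| ≤ M := le_max_left _ _
            rw [abs_le] at this; linarith [neg_abs_le lo]
          linarith [neg_le_of_abs_le (le_max_left |lo| |hi|)]
        · exact le_trans (hhib _ hIa) (le_trans (le_abs_self hi) (le_max_right _ _))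
      have hcos : Real.cos M ≤ Real.cos |θ a| :=
        Real.cos_le_cos_of_nonneg_of_le_pi (abs_nonneg _) hMπ.le habs
      rw [Real.cos_abs] at hcos
      have hca : Real.cos (θ a) = (u a).re / ‖u a‖ := Complex.cos_arg hanz
      have habs0 : 0 < ‖u a‖ := norm_pos_iff.2 hanz
      have : Real.cos M * ‖u a‖ ≤ Real.cos (θ a) * ‖u a‖ :=
        mul_le_mul_of_nonneg_right hcos habs0.le
      calc Real.cos M * ‖u a‖ ≤ Real.cos (θ a) * ‖u a‖ := this
        _ = (u a).re := by rw [hca]; field_simp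
    have hScl : IsClosed {y | Real.cos M * ‖u y‖ ≤ (u y).re} := by
      apply isClosed_le
      · exact continuous_const.mul (continuous_norm.comp hucont)
      · exact Complex.continuous_re.comp hucont
    have hx1S : x1 ∈ {y | Real.cos M * ‖u y‖ ≤ (u y).re} :=
      (closure_minimal hsub hScl) h1.1
    have hx1abs : ‖u x1‖ = Complex.normSq (z x1) := by
      rw [hux1, norm_neg, Complex.norm_real, Real.norm_eq_abs, abs_of_pos hnsq]
    rw [Set.mem_setOf_eq, hx1abs, hux1re] at hx1S
    have hcosM : Real.cos Real.pi < Real.cos M :=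
      Real.cos_lt_cos_of_nonneg_of_le_pi hM0 le_rfl hMπ
    rw [Real.cos_pi] at hcosM
    nlinarith [hnsq, hx1S, hcosM]
  -- conclude using x2, x3
  have habs2 : |θ x2| < Real.pi := by
    rw [abs_lt]
    exact ⟨Complex.neg_pi_lt_arg _, lt_of_le_of_ne (Complex.arg_le_pi _)
      (hargne x2 hx2f h12.symm)⟩
  have habs3 : |θ x3| < Real.pi := by
    rw [abs_lt]
    exact ⟨Complex.neg_pi_lt_arg _, lt_of_le_of_ne (Complex.arg_le_pi _)
      (hargne x3 hx3f h13.symm)⟩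
  have hcl2 : θ x2 ∈ closure I := hclmem x2 h2 h12.symm
  have hcl3 : θ x3 ∈ closure I := hclmem x3 h3 h13.symm
  have hne23 : θ x2 ≠ θ x3 := fun h => h23 (inj x2 hx2f x3 hx3f h)
  rcases bd x2 h2 with hub2 | hlb2 <;> rcases bd x3 h3 with hub3 | hlb3
  · -- both upper bounds
    have hle23 : θ x2 ≤ θ x3 := by
      have hsub' : I ⊆ Set.Iic (θ x3) := fun a ha => hub3 a ha
      exact Set.mem_Iic.mp ((isClosed_Iic.closure_subset_iff.2 hsub') hcl2)
    have hle32 : θ x3 ≤ θ x2 := by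
      have hsub' : I ⊆ Set.Iic (θ x2) := fun a ha => hub2 a ha
      exact Set.mem_Iic.mp ((isClosed_Iic.closure_subset_iff.2 hsub') hcl3)
    exact hne23 (le_antisymm hle23 hle32)
  · exact main (θ x3) (θ x2) habs3 habs2 hlb3 hub2
  · exact main (θ x2) (θ x3) habs2 habs3 hlb2 hub3
  · -- both lower bounds
    have hle23 : θ x2 ≤ θ x3 := by
      have hsub' : I ⊆ Set.Ici (θ x2) := fun a ha => hlb2 a ha
      exact Set.mem_Ici.mp ((isClosed_Ici.closure_subset_iff.2 hsub') hcl3)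
    have hle32 : θ x3 ≤ θ x2 := by
      have hsub' : I ⊆ Set.Ici (θ x3) := fun a ha => hlb3 a ha
      exact Set.mem_Ici.mp ((isClosed_Ici.closure_subset_iff.2 hsub') hcl2)
    exact hne23 (le_antisymm hle23 hle32)

/-- Radial retraction: preconnectedness of `P \ Q` descends to the boundary part. -/
lemma wd_retract {P Q : Set (ℝ × ℝ)} (hPcl : IsClosed P) (hPcp : IsCompact P)
    (hPconv : Convex ℝ P) (hQconv : Convex ℝ Q) {o : ℝ × ℝ} (hoP : o ∈ interior P)
    (hoQ : o ∈ Q) (hconn : IsPreconnected (P \ Q)) :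
    IsPreconnected (frontier P \ Q) := by
  set P0 : Set (ℝ × ℝ) := (fun v => o + v) ⁻¹' P with hP0def
  have hhom : (fun v : ℝ × ℝ => o + v) = ⇑(Homeomorph.addLeft o) := rfl
  have hmemP0 : ∀ v : ℝ × ℝ, v ∈ P0 ↔ o + v ∈ P := fun v => Iff.rfl
  have hintP0 : interior P0 = (fun v => o + v) ⁻¹' interior P := by
    rw [hP0def, hhom, ← Homeomorph.preimage_interior]
  have hfrP0 : frontier P0 = (fun v => o + v) ⁻¹' frontier P := by
    rw [hP0def, hhom, ← Homeomorph.preimage_frontier]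
  have hP00 : (0 : ℝ × ℝ) ∈ interior P0 := by
    rw [hintP0]
    simpa using hoP
  have hP0conv : Convex ℝ P0 := by
    intro x hx y hy a b ha hb hab
    rw [hmemP0] at hx hy ⊢
    have := hPconv hx hy ha hb hab
    have hoo : a • o + b • o = o := by rw [← add_smul, hab, one_smul]
    have heq : a • (o + x) + b • (o + y) = o + (a • x + b • y) := by
      calc a • (o + x) + b • (o + y) = (a • o + b • o) + (a • x + b • y) := by module
        _ = o + (a • x + b • y) := by rw [hoo]
    rwa [heq] at this
  have hP0cp : IsCompact P0 := by
    rw [hP0def, hhom]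
    exact (Homeomorph.isCompact_preimage _).2 hPcp
  have hnhds : P0 ∈ nhds (0 : ℝ × ℝ) := mem_interior_iff_mem_nhds.1 hP00
  have habs : Absorbent ℝ P0 := absorbent_nhds_zero hnhds
  have hbdd : Bornology.IsVonNBounded ℝ P0 := NormedSpace.isVonNBounded_of_isBounded ℝ hP0cp.isBounded
  set G : (ℝ × ℝ) → ℝ := fun y => gauge P0 (y - o) with hGdef
  have hGpos : ∀ y : ℝ × ℝ, y ≠ o → 0 < G y := by
    intro y hy
    exact (gauge_pos habs hbdd).2 (sub_ne_zero.2 hy)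
  have hGle : ∀ y ∈ P, G y ≤ 1 := by
    intro y hy
    exact gauge_le_one_of_mem (by rw [hmemP0]; simpa using hy)
  have hGfr : ∀ y : ℝ × ℝ, G y = 1 ↔ y ∈ frontier P := by
    intro y
    rw [hGdef]
    rw [gauge_eq_one_iff_mem_frontier hP0conv hnhds, hfrP0]
    simp
  set r : (ℝ × ℝ) → ℝ × ℝ := fun y => o + (G y)⁻¹ • (y - o) with hrdef
  have hrcont : ContinuousOn r {y : ℝ × ℝ | y ≠ o} := by
    apply continuousOn_const.add
    apply ContinuousOn.fun_smul
    · apply ContinuousOn.inv₀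
      · exact ((continuous_gauge hP0conv hnhds).comp
          (continuous_id.sub continuous_const)).continuousOn
      · exact fun y hy => (hGpos y hy).ne'
    · exact (continuous_id.sub continuous_const).continuousOn
  have himg : frontier P \ Q = r '' (P \ Q) := by
    apply Set.Subset.antisymm
    · intro y hy
      have hyP : y ∈ P := hPcl.frontier_subset hy.1
      have hG1 : G y = 1 := (hGfr y).2 hy.1
      have hry : r y = y := by
        show o + (G y)⁻¹ • (y - o) = y
        rw [hG1, inv_one, one_smul]
        abel
      exact ⟨y, ⟨hyP, hy.2⟩, hry⟩
    · rintro _ ⟨p, hp, rfl⟩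
      have hpo : p ≠ o := fun h => hp.2 (h ▸ hoQ)
      have hc0 : 0 < G p := hGpos p hpo
      have hc1 : G p ≤ 1 := hGle p hp.1
      have hrfr : r p ∈ frontier P := by
        rw [← hGfr]
        have hrpo : r p - o = (G p)⁻¹ • (p - o) := by
          show o + (G p)⁻¹ • (p - o) - o = (G p)⁻¹ • (p - o)
          abel
        show gauge P0 (r p - o) = 1
        rw [hrpo, gauge_smul_of_nonneg (inv_nonneg.2 hc0.le)]
        show (G p)⁻¹ * G p = 1
        exact inv_mul_cancel₀ hc0.ne'
      refine ⟨hrfr, ?_⟩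
      intro hrQ
      have hcc : G p • ((G p)⁻¹ • (p - o)) = p - o := by
        rw [smul_smul, mul_inv_cancel₀ hc0.ne', one_smul]
      have hpe : (1 - G p) • o + G p • r p = p := by
        rw [hrdef]
        show (1 - G p) • o + G p • (o + (G p)⁻¹ • (p - o)) = p
        rw [smul_add, hcc]
        module
      have : p ∈ Q := by
        rw [← hpe]
        exact hQconv hoQ hrQ (by linarith) hc0.le (by ring)
      exact hp.2 this
  rw [himg]
  apply hconn.image
  apply hrcont.mono
  intro y hy
  exact fun h => hy.2 (h ▸ hoQ)

/-- At every common boundary point, there are nearby boundary points of `P` outside `Q`. -/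
lemma wd_trans (s t : Finset (ℝ × ℝ))
    (hst : (s : Set (ℝ × ℝ)) ∩ (t : Set (ℝ × ℝ)) = ∅)
    (hgen : ∀ p q r : ℝ × ℝ, p ∈ (s : Set (ℝ × ℝ)) ∪ (t : Set (ℝ × ℝ)) →
      q ∈ (s : Set (ℝ × ℝ)) ∪ (t : Set (ℝ × ℝ)) →
      r ∈ (s : Set (ℝ × ℝ)) ∪ (t : Set (ℝ × ℝ)) →
      p ≠ q → q ≠ r → p ≠ r → ¬ Collinear ℝ ({p, q, r} : Set (ℝ × ℝ)))
    (hPint : (interior (convexHull ℝ (s : Set (ℝ × ℝ)))).Nonempty)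
    (hQint : (interior (convexHull ℝ (t : Set (ℝ × ℝ)))).Nonempty)
    {x : ℝ × ℝ} (hxP : x ∈ frontier (convexHull ℝ (s : Set (ℝ × ℝ))))
    (hxQ : x ∈ frontier (convexHull ℝ (t : Set (ℝ × ℝ)))) :
    x ∈ closure (frontier (convexHull ℝ (s : Set (ℝ × ℝ))) \ convexHull ℝ (t : Set (ℝ × ℝ))) := by
  classical
  set P := convexHull ℝ (s : Set (ℝ × ℝ)) with hPdef
  set Q := convexHull ℝ (t : Set (ℝ × ℝ)) with hQdef
  have hPcl : IsClosed P := (s.finite_toSet.isCompact_convexHull ℝ).isClosed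
  have hQcl : IsClosed Q := (t.finite_toSet.isCompact_convexHull ℝ).isClosed
  have hdisj : ∀ y : ℝ × ℝ, y ∈ (s : Set (ℝ × ℝ)) → y ∈ (t : Set (ℝ × ℝ)) → False := by
    intro y hys hyt
    have hmem : y ∈ (s : Set (ℝ × ℝ)) ∩ (t : Set (ℝ × ℝ)) := ⟨hys, hyt⟩
    rw [hst] at hmem
    exact hmem
  have hcolS : ∀ p q r : ℝ × ℝ, p ∈ (s : Set (ℝ × ℝ)) → q ∈ (s : Set (ℝ × ℝ)) →
      r ∈ (s : Set (ℝ × ℝ)) → p ≠ q → q ≠ r → p ≠ r → ¬ Collinear ℝ ({p, q, r} : Set (ℝ × ℝ)) :=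
    fun p q r hp hq hr => hgen p q r (Or.inl hp) (Or.inl hq) (Or.inl hr)
  have hcolT : ∀ p q r : ℝ × ℝ, p ∈ (t : Set (ℝ × ℝ)) → q ∈ (t : Set (ℝ × ℝ)) →
      r ∈ (t : Set (ℝ × ℝ)) → p ≠ q → q ≠ r → p ≠ r → ¬ Collinear ℝ ({p, q, r} : Set (ℝ × ℝ)) :=
    fun p q r hp hq hr => hgen p q r (Or.inr hp) (Or.inr hq) (Or.inr hr)
  obtain ⟨f, u, v, hus, hvs, hfle, hflt, hfseg, hfu, hfv⟩ := wd_face s hcolS hxP hPint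
  obtain ⟨g, w, z, hwt, hzt, hgle, hglt, hgseg, hgw, hgz⟩ := wd_face t hcolT hxQ hQint
  have hxPm : x ∈ P := hPcl.frontier_subset hxP
  have hxQm : x ∈ Q := hQcl.frontier_subset hxQ
  have hxuv : x ∈ segment ℝ u v := hfseg x hxPm rfl
  have hxwz : x ∈ segment ℝ w z := hgseg x hxQm rfl
  -- x is not a point of s ∪ t
  have hxns : x ∉ (s : Set (ℝ × ℝ)) := by
    intro hxs
    rcases eq_or_ne w z with hwz | hwz
    · rw [hwz, segment_same] at hxwz
      exact hdisj x hxs (hxwz ▸ hzt)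
    · rcases eq_or_ne x w with hxw | hxw
      · exact hdisj x hxs (hxw ▸ hwt)
      rcases eq_or_ne x z with hxz | hxz
      · exact hdisj x hxs (hxz ▸ hzt)
      have hcol : Collinear ℝ ({x, w, z} : Set (ℝ × ℝ)) := by
        have hwb : Wbtw ℝ w x z := mem_segment_iff_wbtw.1 hxwz
        refine hwb.collinear.subset ?_
        intro y hy
        simp only [Set.mem_insert_iff, Set.mem_singleton_iff] at hy ⊢
        tauto
      exact hgen x w z (Or.inl hxs) (Or.inr hwt) (Or.inr hzt) hxw hwz hxz hcol
  have hxnt : x ∉ (t : Set (ℝ × ℝ)) := by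
    intro hxt
    rcases eq_or_ne u v with huv | huv
    · rw [huv, segment_same] at hxuv
      exact hdisj x (hxuv ▸ hvs) hxt
    · rcases eq_or_ne x u with hxu | hxu
      · exact hdisj x (hxu ▸ hus) hxt
      rcases eq_or_ne x v with hxv | hxv
      · exact hdisj x (hxv ▸ hvs) hxt
      have hcol : Collinear ℝ ({x, u, v} : Set (ℝ × ℝ)) := by
        have hwb : Wbtw ℝ u x v := mem_segment_iff_wbtw.1 hxuv
        refine hwb.collinear.subset ?_
        intro y hy
        simp only [Set.mem_insert_iff, Set.mem_singleton_iff] at hy ⊢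
        tauto
      exact hgen x u v (Or.inr hxt) (Or.inl hus) (Or.inl hvs) hxu huv hxv hcol
  have huv : u ≠ v := by
    intro h
    rw [h, segment_same] at hxuv
    exact hxns (hxuv ▸ hvs)
  have hwzne : w ≠ z := by
    intro h
    rw [h, segment_same] at hxwz
    exact hxnt (hxwz ▸ hzt)
  obtain ⟨a, b, ha, hb, hab, hx⟩ := hxuv
  have ha0 : 0 < a := by
    rcases ha.lt_or_eq with h | h
    · exact h
    · exfalso
      have hb1 : b = 1 := by linarith
      rw [← h, hb1] at hx
      simp at hx
      exact hxns (hx ▸ hvs)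
  have hb0 : 0 < b := by
    rcases hb.lt_or_eq with h | h
    · exact h
    · exfalso
      have ha1 : a = 1 := by linarith
      rw [← h, ha1] at hx
      simp at hx
      exact hxns (hx ▸ hus)
  obtain ⟨aw, bw, haw, hbw, habw, hxw⟩ := hxwz
  -- the segment [u,v] lies in the frontier of P
  have hsegfr : ∀ y ∈ segment ℝ u v, y ∈ frontier P := by
    intro y hy
    have hyP : y ∈ P :=
      (convex_convexHull ℝ (s : Set (ℝ × ℝ))).segment_subset
        (subset_convexHull ℝ _ hus) (subset_convexHull ℝ _ hvs) hy
    obtain ⟨a', b', ha', hb', hab', hy'⟩ := hy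
    have hfy : f y = f x := by
      have hfy1 : f y = a' * f u + b' * f v := by
        rw [← hy']
        simp [smul_eq_mul]
      rw [hfy1, hfu, hfv, ← add_mul, hab', one_mul]
    have hyni : y ∉ interior P := by
      intro hin
      have := hflt y hin
      rw [hfy] at this
      exact lt_irrefl _ this
    exact ⟨subset_closure hyP, hyni⟩
  have hd1 : f (v - u) = 0 := by rw [map_sub, hfu, hfv, sub_self]
  by_cases hgd1 : g (v - u) = 0
  · -- parallel case: contradiction with general position
    exfalso
    have hgne : ∃ p, g p ≠ 0 := by
      obtain ⟨q0, hq0⟩ := hQint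
      refine ⟨x - q0, ?_⟩
      rw [map_sub]
      have hlt := hglt q0 hq0
      intro h
      rw [sub_eq_zero] at h
      exact absurd h.symm (ne_of_lt hlt)
    have hgd2 : g (z - w) = 0 := by rw [map_sub, hgw, hgz, sub_self]
    obtain ⟨rr, hrr⟩ := wd_ker_par g hgne hgd1 hgd2 (sub_ne_zero.2 (Ne.symm huv))
    have hxe : x = b • (v - u) + u := by
      rw [← hx]
      have haa : a = 1 - b := by linarith
      rw [haa]
      module
    have hxe2 : x = bw • (z - w) + w := by
      rw [← hxw]
      have haa : aw = 1 - bw := by linarith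
      rw [haa]
      module
    rw [hrr] at hxe2
    rw [hxe] at hxe2
    have hweq : w = (b - bw * rr) • (v - u) + u := by
      have hw' : w = b • (v - u) + u - bw • rr • (v - u) := by
        calc w = bw • rr • (v - u) + w - bw • rr • (v - u) := by abel
          _ = (b • (v - u) + u) - bw • rr • (v - u) := by rw [← hxe2]
      rw [hw', smul_smul]
      module
    have hwlm : w = AffineMap.lineMap u v (b - bw * rr) := by
      rw [AffineMap.lineMap_apply]
      rw [hweq]
      simp [vsub_eq_sub, vadd_eq_add]
    have hwmem : w ∈ line[ℝ, u, v] := by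
      rw [hwlm]
      exact AffineMap.lineMap_mem_affineSpan_pair _ _ _
    have hcol : Collinear ℝ ({w, u, v} : Set (ℝ × ℝ)) :=
      collinear_insert_of_mem_affineSpan_pair hwmem
    have hwu : w ≠ u := fun h => hdisj u hus (h ▸ hwt)
    have hwv : w ≠ v := fun h => hdisj v hvs (h ▸ hwt)
    exact hgen w u v (Or.inr hwt) (Or.inl hus) (Or.inl hvs) hwu huv hwv hcol
  · -- transversal case: approximate x from within frontier P \ Q
    rw [Metric.mem_closure_iff]
    intro ε hε
    have hb1 : b < 1 := by linarith
    set nrm : ℝ := ‖v - u‖ with hnrm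
    have hnrm0 : 0 < nrm := by
      rw [hnrm, norm_pos_iff, sub_ne_zero]
      exact Ne.symm huv
    have hmpos : 0 < min b (1 - b) := lt_min hb0 (by linarith)
    set δ : ℝ := min (min b (1 - b) / 2) (ε / (2 * (nrm + 1))) with hδdef
    have hδ0 : 0 < δ := by
      apply lt_min
      · linarith
      · positivity
    set η : ℝ := if 0 < g (v - u) then δ else -δ with hηdef
    have hηc : 0 < η * g (v - u) := by
      by_cases hc : 0 < g (v - u)
      · rw [hηdef, if_pos hc]
        exact mul_pos hδ0 hc
      · have hlt : g (v - u) < 0 := lt_of_le_of_ne (not_lt.1 hc) hgd1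
        rw [hηdef, if_neg hc]
        exact mul_pos_of_neg_of_neg (neg_lt_zero.2 hδ0) hlt
    have hηabs : |η| ≤ δ := by
      rw [hηdef]
      split_ifs
      · rw [abs_of_pos hδ0]
      · rw [abs_neg, abs_of_pos hδ0]
    have hηb : |η| ≤ min b (1 - b) / 2 := le_trans hηabs (min_le_left _ _)
    have hηε : |η| ≤ ε / (2 * (nrm + 1)) := le_trans hηabs (min_le_right _ _)
    set y := (1 - (b + η)) • u + (b + η) • v with hydef
    have hyseg : y ∈ segment ℝ u v := by
      refine ⟨1 - (b + η), b + η, ?_, ?_, by ring, rfl⟩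
      · have h' := abs_le.1 hηb
        have h'' := min_le_right b (1 - b)
        linarith [h'.2]
      · have h' := abs_le.1 hηb
        have h'' := min_le_left b (1 - b)
        linarith [h'.1]
    have hyfr : y ∈ frontier P := hsegfr y hyseg
    have hyx : y = x + η • (v - u) := by
      rw [← hx]
      have haa : a = 1 - b := by linarith
      rw [haa, hydef]
      module
    have hynQ : y ∉ Q := by
      intro hyQ
      have hley := hgle y hyQ
      have hgy : g y = g x + η * g (v - u) := by
        rw [hyx, map_add, map_smul]
        simp [smul_eq_mul]
      linarith [hηc]
    have hdist : dist x y < ε := by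
      rw [dist_comm, dist_eq_norm, hyx]
      have heq : x + η • (v - u) - x = η • (v - u) := by abel
      rw [heq, norm_smul, Real.norm_eq_abs]
      have h1 : |η| * nrm ≤ ε / (2 * (nrm + 1)) * nrm :=
        mul_le_mul_of_nonneg_right hηε hnrm0.le
      have h2 : ε / (2 * (nrm + 1)) * nrm < ε := by
        rw [div_mul_eq_mul_div, div_lt_iff₀ (by positivity)]
        nlinarith
      exact lt_of_le_of_lt h1 h2
    exact ⟨y, ⟨hyfr, hynQ⟩, hdist⟩

/-- The two endpoints of a segment whose interior touches the boundary lie on a common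
edge segment of the polygon. -/
lemma wd_ends (s : Finset (ℝ × ℝ)) (hs : s.Nonempty)
    (hcolS : ∀ p q r : ℝ × ℝ, p ∈ (s : Set (ℝ × ℝ)) → q ∈ (s : Set (ℝ × ℝ)) →
      r ∈ (s : Set (ℝ × ℝ)) → p ≠ q → q ≠ r → p ≠ r → ¬ Collinear ℝ ({p, q, r} : Set (ℝ × ℝ)))
    {p q m : ℝ × ℝ} (hm : m ∈ frontier (convexHull ℝ (s : Set (ℝ × ℝ))))
    (hpP : p ∈ convexHull ℝ (s : Set (ℝ × ℝ))) (hqP : q ∈ convexHull ℝ (s : Set (ℝ × ℝ)))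
    {am bm : ℝ} (ham : 0 < am) (hbm : 0 < bm) (habm : am + bm = 1)
    (hmeq : am • p + bm • q = m) :
    ∃ u v : ℝ × ℝ, u ∈ s ∧ v ∈ s ∧ p ∈ segment ℝ u v ∧ q ∈ segment ℝ u v := by
  by_cases hint : (interior (convexHull ℝ (s : Set (ℝ × ℝ)))).Nonempty
  · obtain ⟨f, u, v, hus, hvs, hfle, hflt, hfseg, hfu, hfv⟩ := wd_face s hcolS hm hint
    have hfm : f m = am * f p + bm * f q := by
      rw [← hmeq]
      simp [smul_eq_mul]
    have hsum : am * f m + bm * f m = f m := by rw [← add_mul, habm, one_mul]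
    have hfp : f p = f m := by
      by_contra hne
      have h1 : f p < f m := lt_of_le_of_ne (hfle p hpP) hne
      have h2 : f q ≤ f m := hfle q hqP
      have h3 : am * f p < am * f m := mul_lt_mul_of_pos_left h1 ham
      have h4 : bm * f q ≤ bm * f m := mul_le_mul_of_nonneg_left h2 hbm.le
      linarith
    have hfq : f q = f m := by
      by_contra hne
      have h1 : f q < f m := lt_of_le_of_ne (hfle q hqP) hne
      have h2 : f p ≤ f m := hfle p hpP
      have h3 : bm * f q < bm * f m := mul_lt_mul_of_pos_left h1 hbm
      have h4 : am * f p ≤ am * f m := mul_le_mul_of_nonneg_left h2 ham.le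
      linarith
    exact ⟨u, v, hus, hvs, hfseg p hpP hfp, hfseg q hqP hfq⟩
  · obtain ⟨u, v, hus, hvs, hPeq⟩ := wd_seg s hs hcolS (not_nonempty_iff_eq_empty.1 hint)
    exact ⟨u, v, hus, hvs, hPeq ▸ hpP, hPeq ▸ hqP⟩

/-- No three distinct collinear points on the common boundary. -/
lemma wd_coll (s t : Finset (ℝ × ℝ)) (hs : s.Nonempty) (ht : t.Nonempty)
    (hst : (s : Set (ℝ × ℝ)) ∩ (t : Set (ℝ × ℝ)) = ∅)
    (hgen : ∀ p q r : ℝ × ℝ, p ∈ (s : Set (ℝ × ℝ)) ∪ (t : Set (ℝ × ℝ)) →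
      q ∈ (s : Set (ℝ × ℝ)) ∪ (t : Set (ℝ × ℝ)) →
      r ∈ (s : Set (ℝ × ℝ)) ∪ (t : Set (ℝ × ℝ)) →
      p ≠ q → q ≠ r → p ≠ r → ¬ Collinear ℝ ({p, q, r} : Set (ℝ × ℝ)))
    {a b c : ℝ × ℝ}
    (haX : a ∈ frontier (convexHull ℝ (s : Set (ℝ × ℝ))) ∩
      frontier (convexHull ℝ (t : Set (ℝ × ℝ))))
    (hbX : b ∈ frontier (convexHull ℝ (s : Set (ℝ × ℝ))) ∩
      frontier (convexHull ℝ (t : Set (ℝ × ℝ))))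
    (hcX : c ∈ frontier (convexHull ℝ (s : Set (ℝ × ℝ))) ∩
      frontier (convexHull ℝ (t : Set (ℝ × ℝ))))
    (hab : a ≠ b) (hac : a ≠ c) (hbc : b ≠ c)
    (hcol : Collinear ℝ ({a, b, c} : Set (ℝ × ℝ))) : False := by
  have hPcl : IsClosed (convexHull ℝ (s : Set (ℝ × ℝ))) :=
    (s.finite_toSet.isCompact_convexHull ℝ).isClosed
  have hQcl : IsClosed (convexHull ℝ (t : Set (ℝ × ℝ))) :=
    (t.finite_toSet.isCompact_convexHull ℝ).isClosed
  have hdisj : ∀ y : ℝ × ℝ, y ∈ (s : Set (ℝ × ℝ)) → y ∈ (t : Set (ℝ × ℝ)) → False := by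
    intro y hys hyt
    have hmem : y ∈ (s : Set (ℝ × ℝ)) ∩ (t : Set (ℝ × ℝ)) := ⟨hys, hyt⟩
    rw [hst] at hmem
    exact hmem
  have hcolS : ∀ p q r : ℝ × ℝ, p ∈ (s : Set (ℝ × ℝ)) → q ∈ (s : Set (ℝ × ℝ)) →
      r ∈ (s : Set (ℝ × ℝ)) → p ≠ q → q ≠ r → p ≠ r → ¬ Collinear ℝ ({p, q, r} : Set (ℝ × ℝ)) :=
    fun p q r hp hq hr => hgen p q r (Or.inl hp) (Or.inl hq) (Or.inl hr)
  have hcolT : ∀ p q r : ℝ × ℝ, p ∈ (t : Set (ℝ × ℝ)) → q ∈ (t : Set (ℝ × ℝ)) →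
      r ∈ (t : Set (ℝ × ℝ)) → p ≠ q → q ≠ r → p ≠ r → ¬ Collinear ℝ ({p, q, r} : Set (ℝ × ℝ)) :=
    fun p q r hp hq hr => hgen p q r (Or.inr hp) (Or.inr hq) (Or.inr hr)
  have key : ∀ p m q : ℝ × ℝ,
      p ∈ frontier (convexHull ℝ (s : Set (ℝ × ℝ))) ∩
        frontier (convexHull ℝ (t : Set (ℝ × ℝ))) →
      m ∈ frontier (convexHull ℝ (s : Set (ℝ × ℝ))) ∩
        frontier (convexHull ℝ (t : Set (ℝ × ℝ))) →
      q ∈ frontier (convexHull ℝ (s : Set (ℝ × ℝ))) ∩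
        frontier (convexHull ℝ (t : Set (ℝ × ℝ))) →
      Wbtw ℝ p m q → p ≠ m → m ≠ q → p ≠ q → False := by
    intro p m q hpX hmX hqX hw hpm hmq hpq
    obtain ⟨am, bm, ham, hbm, habm, hmeq⟩ := hw.mem_segment
    have ham0 : 0 < am := by
      rcases ham.lt_or_eq with h | h
      · exact h
      · exfalso
        have hbm1 : bm = 1 := by linarith
        rw [← h, hbm1] at hmeq
        simp at hmeq
        exact hmq (hmeq.symm)
    have hbm0 : 0 < bm := by
      rcases hbm.lt_or_eq with h | h
      · exact h
      · exfalso
        have ham1 : am = 1 := by linarith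
        rw [← h, ham1] at hmeq
        simp at hmeq
        exact hpm hmeq
    obtain ⟨u, v, hus, hvs, hpuv, hquv⟩ := wd_ends s hs hcolS hmX.1
      (hPcl.frontier_subset hpX.1) (hPcl.frontier_subset hqX.1) ham0 hbm0 habm hmeq
    obtain ⟨w, z, hwt, hzt, hpwz, hqwz⟩ := wd_ends t ht hcolT hmX.2
      (hQcl.frontier_subset hpX.2) (hQcl.frontier_subset hqX.2) ham0 hbm0 habm hmeq
    rcases eq_or_ne u v with huv | huv
    · rw [huv, segment_same] at hpuv hquv
      exact hpq (hpuv.trans hquv.symm)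
    rcases eq_or_ne w z with hwz | hwz
    · rw [hwz, segment_same] at hpwz hqwz
      exact hpq (hpwz.trans hqwz.symm)
    have hpuvline : p ∈ line[ℝ, u, v] := (mem_segment_iff_wbtw.1 hpuv).mem_affineSpan
    have hquvline : q ∈ line[ℝ, u, v] := (mem_segment_iff_wbtw.1 hquv).mem_affineSpan
    have col4 : Collinear ℝ ({p, q, u, v} : Set (ℝ × ℝ)) :=
      collinear_insert_insert_of_mem_affineSpan_pair hpuvline hquvline
    have hu_line : u ∈ line[ℝ, p, q] :=
      col4.mem_affineSpan_of_mem_of_ne (by simp) (by simp) (by simp) hpq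
    have hv_line : v ∈ line[ℝ, p, q] :=
      col4.mem_affineSpan_of_mem_of_ne (by simp) (by simp) (by simp) hpq
    have hpwzline : p ∈ line[ℝ, w, z] := (mem_segment_iff_wbtw.1 hpwz).mem_affineSpan
    have hqwzline : q ∈ line[ℝ, w, z] := (mem_segment_iff_wbtw.1 hqwz).mem_affineSpan
    have col4t : Collinear ℝ ({p, q, w, z} : Set (ℝ × ℝ)) :=
      collinear_insert_insert_of_mem_affineSpan_pair hpwzline hqwzline
    have hw_line : w ∈ line[ℝ, p, q] :=
      col4t.mem_affineSpan_of_mem_of_ne (by simp) (by simp) (by simp) hpq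
    have hfin : Collinear ℝ ({u, v, w} : Set (ℝ × ℝ)) :=
      collinear_triple_of_mem_affineSpan_pair hu_line hv_line hw_line
    exact hgen u v w (Or.inl hus) (Or.inl hvs) (Or.inr hwt) huv
      (fun h => hdisj v hvs (h ▸ hwt)) (fun h => hdisj u hus (h ▸ hwt)) hfin
  rcases hcol.wbtw_or_wbtw_or_wbtw with h | h | h
  · exact key a b c haX hbX hcX h hab hbc hac
  · exact key b c a hbX hcX haX h hbc (Ne.symm hac) (Ne.symm hab)
  · exact key c a b hcX haX hbX h (Ne.symm hac) hab (Ne.symm hbc)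

/-- Three non-collinear points span the plane: their hull has interior points. -/
lemma wd_span_top {a b c : ℝ × ℝ} (h : ¬ Collinear ℝ ({a, b, c} : Set (ℝ × ℝ))) :
    (interior (convexHull ℝ ({a, b, c} : Set (ℝ × ℝ)))).Nonempty := by
  haveI : FiniteDimensional ℝ (vectorSpan ℝ ({a, b, c} : Set (ℝ × ℝ))) :=
    finiteDimensional_vectorSpan_of_finite ℝ (Set.toFinite _)
  rw [(convex_convexHull ℝ _).interior_nonempty_iff_affineSpan_eq_top, affineSpan_convexHull]
  by_contra htop
  apply h
  rw [collinear_iff_finrank_le_one]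
  by_contra hgt
  push_neg at hgt
  have htop2 : vectorSpan ℝ ({a, b, c} : Set (ℝ × ℝ)) = ⊤ := by
    apply Submodule.eq_top_of_finrank_eq
    have hle : Module.finrank ℝ (vectorSpan ℝ ({a, b, c} : Set (ℝ × ℝ))) ≤ 2 := by
      rw [← wd_finrank_plane]
      exact Submodule.finrank_le _
    rw [wd_finrank_plane]
    omega
  exact htop ((AffineSubspace.affineSpan_eq_top_iff_vectorSpan_eq_top_of_nonempty ℝ (ℝ × ℝ)
    (ℝ × ℝ) ⟨a, by simp⟩).2 htop2)

theorem weakly_disjoint_boundaries_intersect_in_at_most_two_points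
    (s t : Finset (ℝ × ℝ)) (hs : s.Nonempty) (ht : t.Nonempty)
    (hst : (s : Set (ℝ × ℝ)) ∩ (t : Set (ℝ × ℝ)) = ∅)
    (hgen : ∀ p q r : ℝ × ℝ, p ∈ (s : Set (ℝ × ℝ)) ∪ (t : Set (ℝ × ℝ)) →
      q ∈ (s : Set (ℝ × ℝ)) ∪ (t : Set (ℝ × ℝ)) →
      r ∈ (s : Set (ℝ × ℝ)) ∪ (t : Set (ℝ × ℝ)) →
      p ≠ q → q ≠ r → p ≠ r → ¬ Collinear ℝ ({p, q, r} : Set (ℝ × ℝ)))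
    (P Q : Set (ℝ × ℝ))
    (hP : P = convexHull ℝ (s : Set (ℝ × ℝ)))
    (hQ : Q = convexHull ℝ (t : Set (ℝ × ℝ)))
    (hPQdiffConn : IsPreconnected (P \ Q))
    (hQPdiffConn : IsPreconnected (Q \ P)) :
    (frontier P ∩ frontier Q).encard ≤ 2 := by
  subst hP hQ
  set P := convexHull ℝ (s : Set (ℝ × ℝ)) with hPdef
  set Q := convexHull ℝ (t : Set (ℝ × ℝ)) with hQdef
  by_contra hcon
  push_neg at hcon
  have h1 : 1 < (frontier P ∩ frontier Q).encard :=
    lt_trans (by norm_num : (1 : ℕ∞) < 2) hcon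
  obtain ⟨a, b, haX, hbX, hab⟩ := Set.one_lt_encard_iff.1 h1
  have hc3 : ∃ c ∈ frontier P ∩ frontier Q, c ≠ a ∧ c ≠ b := by
    by_contra hno
    push_neg at hno
    have hsub : frontier P ∩ frontier Q ⊆ {a, b} := by
      intro y hy
      rcases eq_or_ne y a with h | h
      · exact Or.inl h
      · exact Or.inr (hno y hy h)
    have hle2 : (frontier P ∩ frontier Q).encard ≤ 2 := by
      refine le_trans (Set.encard_mono hsub) (le_trans (Set.encard_insert_le _ _) ?_)
      rw [Set.encard_singleton]
      norm_num
    exact absurd hle2 (not_le.2 hcon)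
  obtain ⟨c, hcX, hca, hcb⟩ := hc3
  have hnc : ¬ Collinear ℝ ({a, b, c} : Set (ℝ × ℝ)) := fun hcol =>
    wd_coll s t hs ht hst hgen haX hbX hcX hab (Ne.symm hca) (Ne.symm hcb) hcol
  have hPcl : IsClosed P := (s.finite_toSet.isCompact_convexHull ℝ).isClosed
  have hQcl : IsClosed Q := (t.finite_toSet.isCompact_convexHull ℝ).isClosed
  have hPcp : IsCompact P := s.finite_toSet.isCompact_convexHull ℝ
  have hPconv : Convex ℝ P := convex_convexHull ℝ _
  have hQconv : Convex ℝ Q := convex_convexHull ℝ _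
  have hcolS : ∀ p q r : ℝ × ℝ, p ∈ (s : Set (ℝ × ℝ)) → q ∈ (s : Set (ℝ × ℝ)) →
      r ∈ (s : Set (ℝ × ℝ)) → p ≠ q → q ≠ r → p ≠ r → ¬ Collinear ℝ ({p, q, r} : Set (ℝ × ℝ)) :=
    fun p q r hp hq hr => hgen p q r (Or.inl hp) (Or.inl hq) (Or.inl hr)
  have hcolT : ∀ p q r : ℝ × ℝ, p ∈ (t : Set (ℝ × ℝ)) → q ∈ (t : Set (ℝ × ℝ)) →
      r ∈ (t : Set (ℝ × ℝ)) → p ≠ q → q ≠ r → p ≠ r → ¬ Collinear ℝ ({p, q, r} : Set (ℝ × ℝ)) :=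
    fun p q r hp hq hr => hgen p q r (Or.inr hp) (Or.inr hq) (Or.inr hr)
  -- degenerate cases: P or Q is a segment; then a, b, c would be collinear
  by_cases hPint : (interior P).Nonempty
  swap
  · obtain ⟨u, v, hus, hvs, hPeq⟩ := wd_seg s hs hcolS (not_nonempty_iff_eq_empty.1 hPint)
    apply hnc
    have hmem : ∀ y : ℝ × ℝ, y ∈ frontier P ∩ frontier Q → y ∈ line[ℝ, u, v] := by
      intro y hy
      have hyP : y ∈ P := hPcl.frontier_subset hy.1
      rw [hPdef, hPeq] at hyP
      exact (mem_segment_iff_wbtw.1 hyP).mem_affineSpan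
    exact collinear_triple_of_mem_affineSpan_pair (hmem a haX) (hmem b hbX) (hmem c hcX)
  by_cases hQint : (interior Q).Nonempty
  swap
  · obtain ⟨w, z, hwt, hzt, hQeq⟩ := wd_seg t ht hcolT (not_nonempty_iff_eq_empty.1 hQint)
    apply hnc
    have hmem : ∀ y : ℝ × ℝ, y ∈ frontier P ∩ frontier Q → y ∈ line[ℝ, w, z] := by
      intro y hy
      have hyQ : y ∈ Q := hQcl.frontier_subset hy.2
      rw [hQdef, hQeq] at hyQ
      exact (mem_segment_iff_wbtw.1 hyQ).mem_affineSpan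
    exact collinear_triple_of_mem_affineSpan_pair (hmem a haX) (hmem b hbX) (hmem c hcX)
  -- main case: both bodies are full-dimensional
  obtain ⟨o, ho⟩ := wd_span_top hnc
  have hsubP : convexHull ℝ ({a, b, c} : Set (ℝ × ℝ)) ⊆ P := by
    apply convexHull_min _ hPconv
    intro y hy
    simp only [Set.mem_insert_iff, Set.mem_singleton_iff] at hy
    rcases hy with rfl | rfl | rfl
    · exact hPcl.frontier_subset haX.1
    · exact hPcl.frontier_subset hbX.1
    · exact hPcl.frontier_subset hcX.1
  have hsubQ : convexHull ℝ ({a, b, c} : Set (ℝ × ℝ)) ⊆ Q := by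
    apply convexHull_min _ hQconv
    intro y hy
    simp only [Set.mem_insert_iff, Set.mem_singleton_iff] at hy
    rcases hy with rfl | rfl | rfl
    · exact hQcl.frontier_subset haX.2
    · exact hQcl.frontier_subset hbX.2
    · exact hQcl.frontier_subset hcX.2
  have hoP : o ∈ interior P := interior_mono hsubP ho
  have hoQ : o ∈ Q := hsubQ (interior_subset ho)
  have hAconn : IsPreconnected (frontier P \ Q) :=
    wd_retract hPcl hPcp hPconv hQconv hoP hoQ hPQdiffConn
  have hmk : ∀ y : ℝ × ℝ, y ∈ frontier P ∩ frontier Q →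
      y ∈ closure (frontier P \ Q) \ (frontier P \ Q) := by
    intro y hy
    refine ⟨wd_trans s t hst hgen hPint hQint hy.1 hy.2, ?_⟩
    intro hmem
    exact hmem.2 (hQcl.frontier_subset hy.2)
  exact wd_circ hPcl hPconv hoP Set.diff_subset hAconn (hmk a haX) (hmk b hbX) (hmk c hcX)
    hab (Ne.symm hca) (Ne.symm hcb)
end

section
/- Let s and t be nonempty finite subsets of ℝ² with s ∩ t = ∅ such that no three distinct points of s ∪ t are collinear, and let P = convexHull ℝ s and Q = convexHull ℝ t. If P and Q are weakly disjoint (i.e., P \ Q and Q \ P are both preconnected) and P ∩ Q ≠ ∅, then some extreme point of P lies in Q or some extreme point of Q lies in P. -/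
set_option maxHeartbeats 1000000
open Set

private lemma wd_exists_dir {φ : (ℝ × ℝ) →L[ℝ] ℝ} (hφ : φ ≠ 0) :
    ∃ d : ℝ × ℝ, d ≠ 0 ∧ ∀ z : ℝ × ℝ, φ z = 0 → ∃ r : ℝ, z = r • d := by
  have hval : ∀ z : ℝ × ℝ, φ z = z.1 * φ (1, 0) + z.2 * φ (0, 1) := by
    intro z
    have h : z = z.1 • ((1:ℝ), (0:ℝ)) + z.2 • ((0:ℝ), (1:ℝ)) := by
      simp [Prod.ext_iff]
    nth_rewrite 1 [h]
    rw [map_add, map_smul, map_smul, smul_eq_mul, smul_eq_mul]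
  set α := φ (1, 0) with hα
  set β := φ (0, 1) with hβ
  have hαβ : ¬(α = 0 ∧ β = 0) := by
    rintro ⟨h1, h2⟩
    apply hφ
    apply ContinuousLinearMap.ext
    intro z
    rw [hval z, h1, h2]
    simp
  refine ⟨(-β, α), ?_, ?_⟩
  · intro h
    rw [Prod.ext_iff] at h
    exact hαβ ⟨h.2, by simpa using h.1⟩
  · intro z hz
    rw [hval z] at hz
    by_cases hcα : α = 0
    · have hβ0 : β ≠ 0 := fun h => hαβ ⟨hcα, h⟩
      have hz2 : z.2 = 0 := by
        rw [hcα] at hz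
        have : z.2 * β = 0 := by linarith
        rcases mul_eq_zero.1 this with h | h
        · exact h
        · exact absurd h hβ0
      refine ⟨-z.1 / β, ?_⟩
      rw [Prod.ext_iff]
      constructor
      · simp; field_simp
      · simp [hcα, hz2]
    · refine ⟨z.2 / α, ?_⟩
      have hz1 : z.1 = -z.2 * β / α := by field_simp; linarith
      rw [Prod.ext_iff]
      constructor
      · simp [hz1]; field_simp
      · simp; field_simp

private lemma wd_collinear {φ : (ℝ × ℝ) →L[ℝ] ℝ} {d : ℝ × ℝ}
    (hker : ∀ z : ℝ × ℝ, φ z = 0 → ∃ r : ℝ, z = r • d) {c : ℝ} {p q r : ℝ × ℝ}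
    (hp : φ p = c) (hq : φ q = c) (hr : φ r = c) :
    Collinear ℝ ({p, q, r} : Set (ℝ × ℝ)) := by
  have hmem : p ∈ ({p, q, r} : Set (ℝ × ℝ)) := by simp
  rw [collinear_iff_of_mem hmem]
  refine ⟨d, ?_⟩
  intro x hx
  have hx0 : φ (x - p) = 0 := by
    have : φ x = c := by
      simp only [Set.mem_insert_iff, Set.mem_singleton_iff] at hx
      rcases hx with rfl | rfl | rfl <;> assumption
    simp [map_sub, this, hp]
  obtain ⟨r', hr'⟩ := hker _ hx0
  exact ⟨r', by rw [← hr']; simp⟩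

private lemma wd_seg_param {d : ℝ × ℝ} (hd : d ≠ 0) (e : ℝ × ℝ) (a b c : ℝ) :
    (a • d + e) ∈ segment ℝ (b • d + e) (c • d + e) ↔ a ∈ Set.uIcc b c := by
  have hgl : ∀ τ : ℝ, AffineMap.lineMap e (d + e) τ = τ • d + e := by
    intro τ
    simp [AffineMap.lineMap_apply]
  have hne : e ≠ d + e := by
    intro h
    apply hd
    have h2 : d + e = 0 + e := by rw [← h]; simp
    simpa using add_right_cancel h2
  have hinj : Function.Injective (AffineMap.lineMap e (d + e) : ℝ →ᵃ[ℝ] ℝ × ℝ) :=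
    AffineMap.lineMap_injective ℝ hne
  rw [← hgl a, ← hgl b, ← hgl c, ← image_segment ℝ (AffineMap.lineMap e (d + e)) b c,
    hinj.mem_set_image, segment_eq_uIcc]

private lemma wd_uIcc {a b p q : ℝ} (hq : q ∈ Set.uIcc a b) (hp : p ∉ Set.uIcc a b) :
    a ∈ Set.uIcc p q ∨ b ∈ Set.uIcc p q := by
  rcases le_total a b with hab | hab
  · rw [Set.uIcc_of_le hab] at hq hp
    obtain ⟨h1, h2⟩ := hq
    rw [Set.mem_Icc] at hp
    push_neg at hp
    rcases le_or_gt p a with h | h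
    · exact Or.inl (Set.mem_uIcc.2 (Or.inl ⟨h, h1⟩))
    · exact Or.inr (Set.mem_uIcc.2 (Or.inr ⟨h2, (hp h.le).le⟩))
  · rw [Set.uIcc_of_ge hab] at hq hp
    obtain ⟨h1, h2⟩ := hq
    rw [Set.mem_Icc] at hp
    push_neg at hp
    rcases le_or_gt p b with h | h
    · exact Or.inr (Set.mem_uIcc.2 (Or.inl ⟨h, h1⟩))
    · exact Or.inl (Set.mem_uIcc.2 (Or.inr ⟨h2, (hp h.le).le⟩))

private lemma wd_frontier {α : Type*} [TopologicalSpace α] {s t : Set α}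
    (hs : IsPreconnected s) (h1 : (s ∩ t).Nonempty) (h2 : (s \ t).Nonempty) :
    (s ∩ frontier t).Nonempty := by
  by_contra hcon
  rw [Set.not_nonempty_iff_eq_empty] at hcon
  have hdisj : ∀ x ∈ s, x ∉ frontier t := by
    intro x hx hfx
    exact absurd hcon (Set.Nonempty.ne_empty ⟨x, hx, hfx⟩)
  have := hs (interior t) (closure t)ᶜ isOpen_interior (isClosed_closure.isOpen_compl)
    (by
      intro x hx
      rcases Classical.em (x ∈ closure t) with h | h
      · left
        rcases Classical.em (x ∈ interior t) with h' | h'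
        · exact h'
        · exact absurd ⟨h, h'⟩ (hdisj x hx)
      · right; exact h)
    (by
      obtain ⟨z, hzs, hzt⟩ := h1
      refine ⟨z, hzs, ?_⟩
      rcases Classical.em (z ∈ interior t) with h' | h'
      · exact h'
      · exact absurd ⟨subset_closure hzt, h'⟩ (hdisj z hzs))
    (by
      obtain ⟨w, hws, hwt⟩ := h2
      refine ⟨w, hws, fun hcl => ?_⟩
      rcases Classical.em (w ∈ interior t) with h' | h'
      · exact hwt (interior_subset h')
      · exact hdisj w hws ⟨hcl, h'⟩)
  obtain ⟨x, _, hxi, hxc⟩ := this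
  exact hxc (subset_closure (interior_subset hxi))

private lemma wd_hull_le {φ : (ℝ × ℝ) →L[ℝ] ℝ} {c : ℝ} {A : Finset (ℝ × ℝ)}
    (h : ∀ x ∈ A, φ x ≤ c) : ∀ x ∈ convexHull ℝ (A : Set (ℝ × ℝ)), φ x ≤ c := by
  intro x hx
  have : convexHull ℝ (A : Set (ℝ × ℝ)) ⊆ {w | φ w ≤ c} :=
    convexHull_min (fun y hy => h y hy) (convex_halfSpace_le ⟨φ.map_add, φ.map_smul⟩ c)
  exact this hx

private lemma wd_face_hull {φ : (ℝ × ℝ) →L[ℝ] ℝ} {c : ℝ} (A : Finset (ℝ × ℝ))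
    (h : ∀ x ∈ A, φ x ≤ c) :
    convexHull ℝ (A : Set (ℝ × ℝ)) ∩ {x | φ x = c}
      = convexHull ℝ {x ∈ (A : Set (ℝ × ℝ)) | φ x = c} := by
  apply Set.Subset.antisymm
  · rintro x ⟨hx, hxc⟩
    rw [Finset.convexHull_eq] at hx
    obtain ⟨w, hw0, hw1, hwx⟩ := hx
    classical
    have hsum : x = ∑ y ∈ A, w y • y := by
      rw [← hwx, A.centerMass_eq_of_sum_1 _ hw1]; rfl
    have hφx : φ x = ∑ y ∈ A, w y * φ y := by
      rw [hsum, map_sum]; simp [map_smul]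
    have hzero : ∀ y ∈ A, w y ≠ 0 → φ y = c := by
      by_contra hcon
      push_neg at hcon
      obtain ⟨y₀, hy₀A, hy₀w, hy₀c⟩ := hcon
      have hlt : φ y₀ < c := lt_of_le_of_ne (h y₀ hy₀A) hy₀c
      have hw0' : 0 < w y₀ := lt_of_le_of_ne (hw0 y₀ hy₀A) (Ne.symm hy₀w)
      have : φ x < c := by
        rw [hφx]
        calc ∑ y ∈ A, w y * φ y < ∑ y ∈ A, w y * c := by
              apply Finset.sum_lt_sum
              · intro i hi
                exact mul_le_mul_of_nonneg_left (h i hi) (hw0 i hi)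
              · exact ⟨y₀, hy₀A, by nlinarith⟩
          _ = c := by rw [← Finset.sum_mul, hw1, one_mul]
      linarith [hxc ▸ this]
    have hfilt : ({y ∈ A | w y ≠ 0} : Finset _).centerMass w id = x := by
      rw [Finset.centerMass_filter_ne_zero, hwx]
    rw [← hfilt]
    apply Finset.centerMass_mem_convexHull
    · intro i hi; exact hw0 i (Finset.mem_filter.1 hi).1
    · rw [Finset.sum_filter_ne_zero, hw1]; exact one_pos
    · intro i hi
      obtain ⟨hiA, hiw⟩ := Finset.mem_filter.1 hi
      exact ⟨hiA, hzero i hiA hiw⟩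
  · apply convexHull_min
    · rintro y ⟨hyA, hyc⟩
      exact ⟨subset_convexHull ℝ _ hyA, hyc⟩
    · exact (convex_convexHull ℝ _).inter (convex_hyperplane ⟨φ.map_add, φ.map_smul⟩ c)

private lemma wd_hull_le' {φ : (ℝ × ℝ) →L[ℝ] ℝ} {c : ℝ} {A : Finset (ℝ × ℝ)}
    (h : ∀ x ∈ A, φ x ≤ c) : ∀ x ∈ convexHull ℝ (A : Set (ℝ × ℝ)), φ x ≤ c := by
  intro x hx
  have : convexHull ℝ (A : Set (ℝ × ℝ)) ⊆ {w | φ w ≤ c} :=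
    convexHull_min (fun y hy => h y hy) (convex_halfSpace_le ⟨φ.map_add, φ.map_smul⟩ c)
  exact this hx

private lemma wd_ext_of_face {φ : (ℝ × ℝ) →L[ℝ] ℝ} {c : ℝ} (A : Finset (ℝ × ℝ))
    (h : ∀ x ∈ A, φ x ≤ c) {u v : ℝ × ℝ} (hu : u ∈ A) (hcu : φ u = c)
    (hface : convexHull ℝ (A : Set (ℝ × ℝ)) ∩ {x | φ x = c} ⊆ segment ℝ u v) :
    u ∈ Set.extremePoints ℝ (convexHull ℝ (A : Set (ℝ × ℝ))) := by
  rw [mem_extremePoints]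
  refine ⟨subset_convexHull ℝ _ hu, ?_⟩
  intro x₁ h₁ x₂ h₂ hseg
  obtain ⟨a, b, ha, hb, hab, habu⟩ := hseg
  have lsum : a * φ x₁ + b * φ x₂ = c := by
    rw [← hcu, ← habu]; simp [map_add, map_smul]
  have lc : a * c + b * c = c := by rw [← add_mul, hab, one_mul]
  have l1 := wd_hull_le' h x₁ h₁
  have l2 := wd_hull_le' h x₂ h₂
  have hc₁ : φ x₁ = c := by
    rcases l1.lt_or_eq with hlt | he
    · exfalso
      have h1' := mul_lt_mul_of_pos_left hlt ha
      have h2' := mul_le_mul_of_nonneg_left l2 hb.le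
      linarith
    · exact he
  have hc₂ : φ x₂ = c := by
    rcases l2.lt_or_eq with hlt | he
    · exfalso
      have h1' := mul_lt_mul_of_pos_left hlt hb
      have h2' := mul_le_mul_of_nonneg_left l1 ha.le
      linarith
    · exact he
  have hx₁s : x₁ ∈ segment ℝ u v := hface ⟨h₁, hc₁⟩
  have hx₂s : x₂ ∈ segment ℝ u v := hface ⟨h₂, hc₂⟩
  obtain ⟨a₁, b₁, ha₁, hb₁, hab₁, hx₁⟩ := hx₁s
  obtain ⟨a₂, b₂, ha₂, hb₂, hab₂, hx₂⟩ := hx₂s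
  have e₁ : x₁ - u = b₁ • (v - u) := by
    rw [← hx₁]
    have : a₁ = 1 - b₁ := by linarith
    rw [this]
    module
  have e₂ : x₂ - u = b₂ • (v - u) := by
    rw [← hx₂]
    have : a₂ = 1 - b₂ := by linarith
    rw [this]
    module
  have hzero : (a * b₁ + b * b₂) • (v - u) = 0 := by
    have : a • (x₁ - u) + b • (x₂ - u) = 0 := by
      have : a • x₁ + b • x₂ = u := habu
      have hab' : a • u + b • u = u := by
        rw [← add_smul, hab, one_smul]
      calc a • (x₁ - u) + b • (x₂ - u) = (a • x₁ + b • x₂) - (a • u + b • u) := by module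
        _ = u - u := by rw [this, hab']
        _ = 0 := sub_self u
    rw [e₁, e₂] at this
    rw [← this]
    module
  by_cases hvu : v - u = 0
  · have hv : v = u := by
      have := sub_eq_zero.1 hvu; exact this
    rw [hv] at e₁ e₂
    simp at e₁ e₂
    constructor
    · exact sub_eq_zero.1 e₁
    · exact sub_eq_zero.1 e₂
  · have hcoef : a * b₁ + b * b₂ = 0 := by
      rcases smul_eq_zero.1 hzero with h' | h'
      · exact h'
      · exact absurd h' hvu
    have hb₁0 : b₁ = 0 := by nlinarith
    have hb₂0 : b₂ = 0 := by nlinarith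
    rw [hb₁0] at e₁; rw [hb₂0] at e₂
    simp at e₁ e₂
    exact ⟨sub_eq_zero.1 e₁, sub_eq_zero.1 e₂⟩

private lemma wd_side {φ : (ℝ × ℝ) →L[ℝ] ℝ} {c : ℝ} {d : ℝ × ℝ} (hd : d ≠ 0)
    (hker : ∀ z : ℝ × ℝ, φ z = 0 → ∃ r : ℝ, z = r • d)
    (A : Finset (ℝ × ℝ))
    (hA3 : ∀ p q r : ℝ × ℝ, p ∈ (A : Set (ℝ × ℝ)) → q ∈ (A : Set (ℝ × ℝ)) →
      r ∈ (A : Set (ℝ × ℝ)) → p ≠ q → q ≠ r → p ≠ r → ¬ Collinear ℝ ({p, q, r} : Set (ℝ × ℝ)))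
    (h : ∀ x ∈ A, φ x ≤ c)
    (hne : (convexHull ℝ (A : Set (ℝ × ℝ)) ∩ {x | φ x = c}).Nonempty) :
    ∃ u v : ℝ × ℝ, u ∈ Set.extremePoints ℝ (convexHull ℝ (A : Set (ℝ × ℝ))) ∧
      v ∈ Set.extremePoints ℝ (convexHull ℝ (A : Set (ℝ × ℝ))) ∧ φ u = c ∧ φ v = c ∧
      convexHull ℝ (A : Set (ℝ × ℝ)) ∩ {x | φ x = c} = segment ℝ u v := by
  classical
  set W : Finset (ℝ × ℝ) := A.filter (fun x => φ x = c) with hW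
  have hWcoe : (W : Set (ℝ × ℝ)) = {x ∈ (A : Set (ℝ × ℝ)) | φ x = c} := by
    simp [hW, Finset.coe_filter]
  have hface : convexHull ℝ (A : Set (ℝ × ℝ)) ∩ {x | φ x = c}
      = convexHull ℝ (W : Set (ℝ × ℝ)) := by
    rw [wd_face_hull A h, hWcoe]
  have hWne : W.Nonempty := by
    rcases hne with ⟨x, hx⟩
    rw [hface] at hx
    by_contra hcon
    rw [Finset.not_nonempty_iff_eq_empty] at hcon
    rw [hcon] at hx
    simp at hx
  have hWcard : W.card ≤ 2 := by
    by_contra hcon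
    push_neg at hcon
    obtain ⟨T, hTW, hT3⟩ := Finset.exists_subset_card_eq hcon
    obtain ⟨p, q, r, hpq, hpr, hqr, hTeq⟩ := Finset.card_eq_three.1 hT3
    have hmem : ∀ x ∈ T, x ∈ A ∧ φ x = c := by
      intro x hx
      have := hTW hx
      exact Finset.mem_filter.1 this
    have hp := hmem p (by rw [hTeq]; simp)
    have hq := hmem q (by rw [hTeq]; simp)
    have hr := hmem r (by rw [hTeq]; simp)
    exact hA3 p q r hp.1 hq.1 hr.1 hpq hqr hpr
      (wd_collinear hker hp.2 hq.2 hr.2)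
  have hc1 : 1 ≤ W.card := Finset.card_pos.2 hWne
  interval_cases h' : W.card
  · -- card = 1
    obtain ⟨u, hu⟩ := Finset.card_eq_one.1 h'
    have huW : u ∈ W := by rw [hu]; exact Finset.mem_singleton_self u
    obtain ⟨huA, huc⟩ := Finset.mem_filter.1 huW
    have hseg : convexHull ℝ (A : Set (ℝ × ℝ)) ∩ {x | φ x = c} = segment ℝ u u := by
      rw [hface, hu]
      simp [segment_same]
    refine ⟨u, u, ?_, ?_, huc, huc, hseg⟩ <;>
      exact wd_ext_of_face A h huA huc (by rw [hseg])
  · -- card = 2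
    obtain ⟨u, v, huv, hWuv⟩ := Finset.card_eq_two.1 h'
    have huW : u ∈ W := by rw [hWuv]; simp
    have hvW : v ∈ W := by rw [hWuv]; simp
    obtain ⟨huA, huc⟩ := Finset.mem_filter.1 huW
    obtain ⟨hvA, hvc⟩ := Finset.mem_filter.1 hvW
    have hseg : convexHull ℝ (A : Set (ℝ × ℝ)) ∩ {x | φ x = c} = segment ℝ u v := by
      rw [hface, hWuv]
      push_cast
      rw [convexHull_pair]
    refine ⟨u, v, ?_, ?_, huc, hvc, hseg⟩
    · exact wd_ext_of_face A h huA huc (by rw [hseg])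
    · exact wd_ext_of_face A h hvA hvc (by rw [hseg, segment_symm])

private lemma wd_KM (A : Finset (ℝ × ℝ)) :
    convexHull ℝ (A : Set (ℝ × ℝ))
      = convexHull ℝ (Set.extremePoints ℝ (convexHull ℝ (A : Set (ℝ × ℝ)))) := by
  have hcomp : IsCompact (convexHull ℝ (A : Set (ℝ × ℝ))) :=
    A.finite_toSet.isCompact_convexHull ℝ
  have h := closure_convexHull_extremePoints hcomp (convex_convexHull ℝ (A : Set (ℝ × ℝ)))
  have hsub : Set.extremePoints ℝ (convexHull ℝ (A : Set (ℝ × ℝ))) ⊆ (A : Set (ℝ × ℝ)) :=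
    extremePoints_convexHull_subset
  have hfin : (Set.extremePoints ℝ (convexHull ℝ (A : Set (ℝ × ℝ)))).Finite :=
    A.finite_toSet.subset hsub
  calc convexHull ℝ (A : Set (ℝ × ℝ))
      = closure (convexHull ℝ (Set.extremePoints ℝ (convexHull ℝ (A : Set (ℝ × ℝ))))) := h.symm
    _ = convexHull ℝ (Set.extremePoints ℝ (convexHull ℝ (A : Set (ℝ × ℝ)))) :=
        (hfin.isClosed_convexHull ℝ).closure_eq

private lemma wd_key (s t : Finset (ℝ × ℝ))
    (hA3s : ∀ p q r : ℝ × ℝ, p ∈ (s : Set (ℝ × ℝ)) → q ∈ (s : Set (ℝ × ℝ)) →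
      r ∈ (s : Set (ℝ × ℝ)) → p ≠ q → q ≠ r → p ≠ r → ¬ Collinear ℝ ({p, q, r} : Set (ℝ × ℝ)))
    (hA3t : ∀ p q r : ℝ × ℝ, p ∈ (t : Set (ℝ × ℝ)) → q ∈ (t : Set (ℝ × ℝ)) →
      r ∈ (t : Set (ℝ × ℝ)) → p ≠ q → q ≠ r → p ≠ r → ¬ Collinear ℝ ({p, q, r} : Set (ℝ × ℝ)))
    (φ : (ℝ × ℝ) →L[ℝ] ℝ) (c : ℝ) (hφ : φ ≠ 0)
    (hQle : ∀ x ∈ t, φ x ≤ c) (e : ℝ × ℝ)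
    (heP : e ∈ convexHull ℝ (s : Set (ℝ × ℝ)))
    (heQ : e ∈ convexHull ℝ (t : Set (ℝ × ℝ))) (hec : φ e = c)
    (hA : ∀ x ∈ Set.extremePoints ℝ (convexHull ℝ (s : Set (ℝ × ℝ))),
      x ∉ convexHull ℝ (t : Set (ℝ × ℝ)))
    (hB : ∀ x ∈ Set.extremePoints ℝ (convexHull ℝ (t : Set (ℝ × ℝ))),
      x ∉ convexHull ℝ (s : Set (ℝ × ℝ))) :
    ¬ IsPreconnected (convexHull ℝ (s : Set (ℝ × ℝ)) \ convexHull ℝ (t : Set (ℝ × ℝ))) := by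
  intro hconn
  set P := convexHull ℝ (s : Set (ℝ × ℝ)) with hPdef
  set Q := convexHull ℝ (t : Set (ℝ × ℝ)) with hQdef
  obtain ⟨d, hd, hker⟩ := wd_exists_dir hφ
  obtain ⟨u, v, huext, hvext, huc, hvc, hQface⟩ :=
    wd_side hd hker t hA3t hQle ⟨e, heQ, hec⟩
  have huP : u ∉ P := hB u huext
  have hvP : v ∉ P := hB v hvext
  obtain ⟨τu, hτu⟩ := hker (u - e) (by simp [map_sub, huc, hec])
  obtain ⟨τv, hτv⟩ := hker (v - e) (by simp [map_sub, hvc, hec])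
  have hu' : u = τu • d + e := by rw [← hτu]; abel
  have hv' : v = τv • d + e := by rw [← hτv]; abel
  have heseg : e ∈ segment ℝ u v := by rw [← hQface]; exact ⟨heQ, hec⟩
  have h0 : (0 : ℝ) ∈ Set.uIcc τu τv := by
    apply (wd_seg_param hd e 0 τu τv).1
    rw [← hu', ← hv']
    simpa using heseg
  have hPL : ∀ p ∈ P, φ p = c → p ∈ segment ℝ u v := by
    intro p hp hpc
    by_contra hns
    obtain ⟨τp, hτp⟩ := hker (p - e) (by simp [map_sub, hpc, hec])
    have hp' : p = τp • d + e := by rw [← hτp]; abel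
    have hτpn : τp ∉ Set.uIcc τu τv := by
      intro hmem
      apply hns
      rw [hu', hv', hp']
      exact (wd_seg_param hd e τp τu τv).2 hmem
    rcases wd_uIcc h0 hτpn with hmem | hmem
    · have h' := (wd_seg_param hd e τu τp 0).2 hmem
      simp only [zero_smul, zero_add] at h'
      rw [← hp', ← hu'] at h'
      exact huP ((convex_convexHull ℝ _).segment_subset hp heP h')
    · have h' := (wd_seg_param hd e τv τp 0).2 hmem
      simp only [zero_smul, zero_add] at h'
      rw [← hp', ← hv'] at h'
      exact hvP ((convex_convexHull ℝ _).segment_subset hp heP h')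
  have hsegQ : segment ℝ u v ⊆ Q :=
    (convex_convexHull ℝ _).segment_subset (extremePoints_subset huext)
      (extremePoints_subset hvext)
  have hPLQ : ∀ p ∈ P, φ p = c → p ∈ Q := fun p hp hpc => hsegQ (hPL p hp hpc)
  have hQle' : ∀ x ∈ Q, φ x ≤ c := wd_hull_le hQle
  have hKM : P = convexHull ℝ (Set.extremePoints ℝ P) := wd_KM s
  have hstep3 : ((P \ Q) ∩ {x | c < φ x}).Nonempty := by
    by_contra hcon
    rw [Set.not_nonempty_iff_eq_empty] at hcon
    have hPle : ∀ x ∈ P, φ x ≤ c := by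
      intro x hx
      by_contra hlt
      push_neg at hlt
      have hxQ : x ∉ Q := fun hxQ => absurd (hQle' x hxQ) (not_le.2 hlt)
      exact absurd hcon (Set.Nonempty.ne_empty ⟨x, ⟨hx, hxQ⟩, hlt⟩)
    have hsle : ∀ x ∈ s, φ x ≤ c := fun x hx => hPle x (subset_convexHull ℝ _ hx)
    obtain ⟨u', v', hu'ext, _, hu'c, _, _⟩ := wd_side hd hker s hA3s hsle ⟨e, heP, hec⟩
    exact hA u' hu'ext (hPLQ u' (extremePoints_subset hu'ext) hu'c)
  have hstep4 : ((P \ Q) ∩ {x | φ x < c}).Nonempty := by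
    by_contra hcon
    rw [Set.not_nonempty_iff_eq_empty] at hcon
    have hsub : ∀ x ∈ P, φ x ≤ c → x ∈ Q := by
      intro x hx hle
      rcases hle.lt_or_eq with hlt | heq
      · by_contra hxQ
        exact absurd hcon (Set.Nonempty.ne_empty ⟨x, ⟨hx, hxQ⟩, hlt⟩)
      · exact hPLQ x hx heq
    have hext : Set.extremePoints ℝ P ⊆ {x | c < φ x} := by
      intro w hw
      by_contra hlt
      simp only [Set.mem_setOf_eq, not_lt] at hlt
      exact hA w hw (hsub w (extremePoints_subset hw) hlt)
    have hPsub : P ⊆ {x | c < φ x} := by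
      rw [hKM]
      exact convexHull_min hext (convex_halfSpace_gt ⟨φ.map_add, φ.map_smul⟩ c)
    have := hPsub heP
    rw [Set.mem_setOf_eq, hec] at this
    exact lt_irrefl c this
  obtain ⟨x, -, hx1, hx2⟩ := hconn {x | c < φ x} {x | φ x < c}
    (isOpen_lt continuous_const φ.continuous)
    (isOpen_lt φ.continuous continuous_const)
    (by
      intro x hx
      have hne : φ x ≠ c := fun heq => hx.2 (hPLQ x hx.1 heq)
      rcases hne.lt_or_gt with h | h
      · exact Or.inr h
      · exact Or.inl h)
    hstep3 hstep4
  exact lt_irrefl (φ x) (lt_trans hx2 hx1)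

private def wd_phi (d : ℝ × ℝ) : (ℝ × ℝ) →L[ℝ] ℝ :=
  { toLinearMap :=
      { toFun := fun x => d.2 * x.1 - d.1 * x.2
        map_add' := by intro x y; simp; ring
        map_smul' := by intro r x; simp; ring }
    cont := by
      fun_prop }

private lemma wd_phi_apply (d x : ℝ × ℝ) : wd_phi d x = d.2 * x.1 - d.1 * x.2 := rfl

theorem weakly_disjoint_one_contains_vertex_of_other
    (s t : Finset (ℝ × ℝ)) (hs : s.Nonempty) (ht : t.Nonempty)
    (hst : (s : Set (ℝ × ℝ)) ∩ (t : Set (ℝ × ℝ)) = ∅)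
    (hgen : ∀ p q r : ℝ × ℝ, p ∈ (s : Set (ℝ × ℝ)) ∪ (t : Set (ℝ × ℝ)) →
      q ∈ (s : Set (ℝ × ℝ)) ∪ (t : Set (ℝ × ℝ)) →
      r ∈ (s : Set (ℝ × ℝ)) ∪ (t : Set (ℝ × ℝ)) →
      p ≠ q → q ≠ r → p ≠ r → ¬ Collinear ℝ ({p, q, r} : Set (ℝ × ℝ)))
    (P Q : Set (ℝ × ℝ))
    (hP : P = convexHull ℝ (s : Set (ℝ × ℝ)))
    (hQ : Q = convexHull ℝ (t : Set (ℝ × ℝ)))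
    (hPQdiffConn : IsPreconnected (P \ Q))
    (hQPdiffConn : IsPreconnected (Q \ P))
    (hinter : (P ∩ Q).Nonempty) :
    (∃ x ∈ Set.extremePoints ℝ P, x ∈ Q) ∨
    (∃ x ∈ Set.extremePoints ℝ Q, x ∈ P) := by
  subst hP hQ
  set P := convexHull ℝ (s : Set (ℝ × ℝ)) with hPdef
  set Q := convexHull ℝ (t : Set (ℝ × ℝ)) with hQdef
  by_contra hcon
  push_neg at hcon
  obtain ⟨hA, hB⟩ := hcon
  obtain ⟨z, hzP, hzQ⟩ := hinter
  have hA3s : ∀ p q r : ℝ × ℝ, p ∈ (s : Set (ℝ × ℝ)) → q ∈ (s : Set (ℝ × ℝ)) →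
      r ∈ (s : Set (ℝ × ℝ)) → p ≠ q → q ≠ r → p ≠ r →
      ¬ Collinear ℝ ({p, q, r} : Set (ℝ × ℝ)) :=
    fun p q r hp hq hr => hgen p q r (Or.inl hp) (Or.inl hq) (Or.inl hr)
  have hA3t : ∀ p q r : ℝ × ℝ, p ∈ (t : Set (ℝ × ℝ)) → q ∈ (t : Set (ℝ × ℝ)) →
      r ∈ (t : Set (ℝ × ℝ)) → p ≠ q → q ≠ r → p ≠ r →
      ¬ Collinear ℝ ({p, q, r} : Set (ℝ × ℝ)) :=
    fun p q r hp hq hr => hgen p q r (Or.inr hp) (Or.inr hq) (Or.inr hr)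
  -- dispatch singleton cases
  by_cases hscard : s.card = 1
  · obtain ⟨a, ha⟩ := Finset.card_eq_one.1 hscard
    have hsa : (s : Set (ℝ × ℝ)) = {a} := by rw [ha]; simp
    have haext : a ∈ Set.extremePoints ℝ P := by
      rw [hPdef, hsa, convexHull_singleton, mem_extremePoints]
      exact ⟨rfl, fun x₁ h₁ x₂ h₂ _ => ⟨h₁, h₂⟩⟩
    have hza : z = a := by
      have := hzP
      rw [hPdef, hsa, convexHull_singleton] at this
      exact this
    exact hA a haext (hza ▸ hzQ)
  by_cases htcard : t.card = 1
  · obtain ⟨a, ha⟩ := Finset.card_eq_one.1 htcard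
    have hta : (t : Set (ℝ × ℝ)) = {a} := by rw [ha]; simp
    have haext : a ∈ Set.extremePoints ℝ Q := by
      rw [hQdef, hta, convexHull_singleton, mem_extremePoints]
      exact ⟨rfl, fun x₁ h₁ x₂ h₂ _ => ⟨h₁, h₂⟩⟩
    have hza : z = a := by
      have := hzQ
      rw [hQdef, hta, convexHull_singleton] at this
      exact this
    exact hB a haext (hza ▸ hzP)
  have htcard2 : 2 ≤ t.card := by
    have h1 : 1 ≤ t.card := Finset.card_pos.2 ht
    omega
  -- get an extreme point of P outside Q
  have hKMP : P = convexHull ℝ (Set.extremePoints ℝ P) := wd_KM s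
  have hextne : (Set.extremePoints ℝ P).Nonempty := by
    by_contra hcon'
    rw [Set.not_nonempty_iff_eq_empty] at hcon'
    have : P = ∅ := by rw [hKMP, hcon', convexHull_empty]
    rw [this] at hzP
    exact hzP
  obtain ⟨w, hwext⟩ := hextne
  have hwP : w ∈ P := extremePoints_subset hwext
  have hwQ : w ∉ Q := hA w hwext
  -- find boundary point e of Q inside P
  have hQclosed : IsClosed Q := t.finite_toSet.isClosed_convexHull ℝ
  have hsegzw : segment ℝ z w ⊆ P := (convex_convexHull ℝ _).segment_subset hzP hwP
  obtain ⟨e, heseg, heF⟩ := wd_frontier (convex_segment z w).isPreconnected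
    ⟨z, left_mem_segment ℝ z w, hzQ⟩ ⟨w, right_mem_segment ℝ z w, hwQ⟩
  have heP : e ∈ P := hsegzw heseg
  have heQ : e ∈ Q := hQclosed.frontier_subset heF
  -- construct a supporting line of Q at e
  have hmain : ∃ (φ : (ℝ × ℝ) →L[ℝ] ℝ) (c : ℝ), φ ≠ 0 ∧ (∀ x ∈ t, φ x ≤ c) ∧ φ e = c := by
    by_cases hcol : Collinear ℝ (t : Set (ℝ × ℝ))
    · -- t is a two-point set
      have htc2 : t.card = 2 := by
        by_contra hne2
        have h3 : 3 ≤ t.card := by omega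
        obtain ⟨T, hTt, hT3⟩ := Finset.exists_subset_card_eq h3
        obtain ⟨p, q, r, hpq, hpr, hqr, hTeq⟩ := Finset.card_eq_three.1 hT3
        refine hA3t p q r ?_ ?_ ?_ hpq hqr hpr (hcol.subset ?_)
        · exact hTt (by rw [hTeq]; simp)
        · exact hTt (by rw [hTeq]; simp)
        · exact hTt (by rw [hTeq]; simp)
        · intro x hx
          simp only [Set.mem_insert_iff, Set.mem_singleton_iff] at hx
          rcases hx with rfl | rfl | rfl <;>
            exact hTt (by rw [hTeq]; simp)
      obtain ⟨u₀, v₀, hne₀, hteq⟩ := Finset.card_eq_two.1 htc2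
      have hd₀ne : (v₀ - u₀) ≠ 0 := sub_ne_zero.2 (Ne.symm hne₀)
      set d₀ : ℝ × ℝ := v₀ - u₀ with hd₀
      set φ : (ℝ × ℝ) →L[ℝ] ℝ := wd_phi d₀ with hφdef
      have hφval : ∀ x : ℝ × ℝ, φ x = d₀.2 * x.1 - d₀.1 * x.2 := fun x => rfl
      have hφne : φ ≠ 0 := by
        intro h0
        have := hφval (d₀.2, -d₀.1)
        rw [h0] at this
        simp at this
        have h1 : d₀.2 * d₀.2 + d₀.1 * d₀.1 = 0 := by linarith
        apply hd₀ne
        have h2 : d₀.1 = 0 ∧ d₀.2 = 0 := by constructor <;> nlinarith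
        exact Prod.ext h2.1 h2.2
      have hveq : φ v₀ = φ u₀ := by
        rw [hφval, hφval, hd₀]
        simp
        ring
      have hQc : ∀ x ∈ t, φ x = φ u₀ := by
        intro x hx
        rw [hteq] at hx
        simp only [Finset.mem_insert, Finset.mem_singleton] at hx
        rcases hx with rfl | rfl
        · rfl
        · exact hveq
      have hec : φ e = φ u₀ := by
        have hsub : Q ⊆ {x | φ x = φ u₀} :=
          convexHull_min (fun y hy => hQc y hy) (convex_hyperplane ⟨φ.map_add, φ.map_smul⟩ _)
        exact hsub heQ
      exact ⟨φ, φ u₀, hφne, fun x hx => le_of_eq (hQc x hx), hec⟩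
    · -- t spans the plane, Q has nonempty interior
      have htne : (t : Set (ℝ × ℝ)).Nonempty := ⟨ht.choose, ht.choose_spec⟩
      have htop : affineSpan ℝ (t : Set (ℝ × ℝ)) = ⊤ := by
        by_contra hns
        apply hcol
        have hvs : vectorSpan ℝ (t : Set (ℝ × ℝ)) ≠ ⊤ := fun h =>
          hns ((AffineSubspace.affineSpan_eq_top_iff_vectorSpan_eq_top_of_nonempty ℝ (ℝ × ℝ) (ℝ × ℝ)
            htne).2 h)
        have hlt : vectorSpan ℝ (t : Set (ℝ × ℝ)) < ⊤ := lt_top_iff_ne_top.2 hvs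
        have hfr := Submodule.finrank_lt (K := ℝ) (V := ℝ × ℝ) hlt.ne
        rw [collinear_iff_finrank_le_one]
        have h2 : Module.finrank ℝ (ℝ × ℝ) = 2 := by simp
        omega
      have hint : (interior Q).Nonempty := by
        rw [Convex.interior_nonempty_iff_affineSpan_eq_top (convex_convexHull ℝ _)]
        rw [affineSpan_convexHull]
        exact htop
      have heni : e ∉ interior Q := heF.2
      obtain ⟨f, hf⟩ := geometric_hahn_banach_open_point
        ((convex_convexHull ℝ (t : Set (ℝ × ℝ))).interior) isOpen_interior heni
      have hfne : f ≠ 0 := by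
        intro h0
        obtain ⟨x₀, hx₀⟩ := hint
        have := hf x₀ hx₀
        rw [h0] at this
        simp at this
      have hQsubcl : Q ⊆ closure (interior Q) := by
        intro a ha
        obtain ⟨x₀, hx₀⟩ := hint
        have htend : Filter.Tendsto (fun τ : ℝ => a + τ • (x₀ - a))
            (nhdsWithin 0 (Set.Ioi 0)) (nhds a) := by
          have hc : Continuous (fun τ : ℝ => a + τ • (x₀ - a)) :=
            continuous_const.add (continuous_id.smul continuous_const)
          have := hc.tendsto 0
          simp only [zero_smul, add_zero] at this
          exact this.mono_left nhdsWithin_le_nhds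
        apply mem_closure_of_tendsto htend
        filter_upwards [Ioo_mem_nhdsGT_of_mem (by norm_num : (0:ℝ) ∈ Set.Ico 0 1)]
          with τ hτ
        have heq : a + τ • (x₀ - a) = (1 - τ) • a + τ • x₀ := by module
        rw [heq]
        exact (convex_convexHull ℝ (t : Set (ℝ × ℝ))).combo_closure_interior_mem_interior
          (subset_closure ha) hx₀ (by linarith [hτ.2]) hτ.1 (by ring)
      have hQle : ∀ x ∈ Q, f x ≤ f e := by
        have hcl : IsClosed {y : ℝ × ℝ | f y ≤ f e} :=
          isClosed_le f.continuous continuous_const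
        have h1 : interior Q ⊆ {y : ℝ × ℝ | f y ≤ f e} := fun y hy => (hf y hy).le
        have h2 : closure (interior Q) ⊆ {y : ℝ × ℝ | f y ≤ f e} := closure_minimal h1 hcl
        exact fun x hx => h2 (hQsubcl hx)
      exact ⟨f, f e, hfne, fun x hx => hQle x (subset_convexHull ℝ _ hx), rfl⟩
  obtain ⟨φ, c, hφne, hQle, hec⟩ := hmain
  exact wd_key s t hA3s hA3t φ c hφne hQle e heP heQ hec hA hB hPQdiffConn
end

section
/- Let R and S be two disjoint geometric trees in ℝ² (each a nonempty compact connected finite union of closed straight-line segments) whose vertices are in general position, meaning no three vertices of R and S together are collinear and no vertex of one tree lies on the frontier of the convex hull of the other. If convexHull ℝ R ∩ convexHull ℝ S ≠ ∅, then at least one of the following holds: (i) convexHull ℝ R ⊆ interior (convexHull ℝ S); (ii) convexHull ℝ S ⊆ interior (convexHull ℝ R); (iii) there exist two adjacent hull vertices p, q of convexHull ℝ S with openSegment ℝ p q ∩ R ≠ ∅; (iv) there exist two adjacent hull vertices p, q of convexHull ℝ R with openSegment ℝ p q ∩ S ≠ ∅. -/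
/-- `p` and `q` are adjacent hull vertices of the convex polygon `P`:
they are distinct extreme points of `P` and the closed segment between them
lies in the frontier of `P` (i.e., `[p, q]` is an edge of `P`). -/
def AdjacentHullVertices (P : Set (ℝ × ℝ)) (p q : ℝ × ℝ) : Prop :=
  p ≠ q ∧ p ∈ Set.extremePoints ℝ P ∧ q ∈ Set.extremePoints ℝ P ∧
    segment ℝ p q ⊆ frontier P


private lemma aux_inj (α β : ℝ) (hne : ¬(α = 0 ∧ β = 0)) {z w : ℝ × ℝ}
    (h1 : α*z.1+β*z.2 = α*w.1+β*w.2) (h2 : -β*z.1+α*z.2 = -β*w.1+α*w.2) : z = w := by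
  have hs : α^2+β^2 ≠ 0 := by
    rcases not_and_or.mp hne with h | h <;>
      [skip; skip] <;> (intro hz; apply h; nlinarith [sq_nonneg α, sq_nonneg β])
  have e1 : (α^2+β^2) * z.1 = (α^2+β^2) * w.1 := by linear_combination α*h1 - β*h2
  have e2 : (α^2+β^2) * z.2 = (α^2+β^2) * w.2 := by linear_combination β*h1 + α*h2
  have z1 := mul_left_cancel₀ hs e1
  have z2 := mul_left_cancel₀ hs e2
  exact Prod.ext z1 z2

private lemma aux_seg (α β : ℝ) (hne : ¬(α = 0 ∧ β = 0)) {z w y : ℝ × ℝ}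
    (hz : α*z.1+β*z.2 = α*y.1+β*y.2) (hw : α*w.1+β*w.2 = α*y.1+β*y.2)
    (h₁ : -β*z.1+α*z.2 ≤ -β*y.1+α*y.2) (h₂ : -β*y.1+α*y.2 ≤ -β*w.1+α*w.2) :
    y ∈ segment ℝ z w := by
  rcases eq_or_lt_of_le (le_trans h₁ h₂) with heq | hlt
  · have hyz : y = z := by
      apply aux_inj α β hne
      · exact hz.symm
      · have : -β*z.1+α*z.2 = -β*y.1+α*y.2 := le_antisymm h₁ (heq ▸ h₂)
        linarith
    exact hyz ▸ left_mem_segment ℝ z w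
  · set D : ℝ := (-β*w.1+α*w.2) - (-β*z.1+α*z.2) with hD
    have hDpos : 0 < D := by simp [hD]; linarith
    set t : ℝ := ((-β*y.1+α*y.2) - (-β*z.1+α*z.2)) / D with ht
    have ht0 : 0 ≤ t := div_nonneg (by linarith) hDpos.le
    have ht1 : t ≤ 1 := by
      rw [ht, div_le_one hDpos]; simp [hD]; linarith
    have hyeq : y = (1-t) • z + t • w := by
      apply aux_inj α β hne
      · have c1 : ((1-t) • z + t • w).1 = (1-t)*z.1 + t*w.1 := by simp
        have c2 : ((1-t) • z + t • w).2 = (1-t)*z.2 + t*w.2 := by simp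
        rw [c1, c2]; linear_combination -hz - t*hw + t*hz
      · have c1 : ((1-t) • z + t • w).1 = (1-t)*z.1 + t*w.1 := by simp
        have c2 : ((1-t) • z + t • w).2 = (1-t)*z.2 + t*w.2 := by simp
        rw [c1, c2]
        have htD : t * D = (-β*y.1+α*y.2) - (-β*z.1+α*z.2) := by
          rw [ht, div_mul_cancel₀]; exact hDpos.ne'
        rw [hD] at htD; ring_nf; ring_nf at htD; linarith
    exact ⟨1-t, t, by linarith, ht0, by ring, hyeq.symm⟩

noncomputable def Complex.abs : AbsoluteValue ℂ ℝ := NormedField.toAbsoluteValue ℂ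

theorem Complex.abs_ofReal (r : ℝ) : Complex.abs (r : ℂ) = |r| := Complex.norm_real r

theorem Complex.abs_mul_exp_arg_mul_I (x : ℂ) :
    ((Complex.abs x : ℝ) : ℂ) * Complex.exp ((Complex.arg x : ℂ) * Complex.I) = x :=
  Complex.norm_mul_exp_arg_mul_I x

theorem Complex.continuous_abs : Continuous Complex.abs := continuous_norm

open Complex in
private lemma two_point_complex (A : Set ℂ) (hA : IsPreconnected A) (hc : IsCompact A)
    {x : ℂ} (hx : x ∈ convexHull ℝ A) : ∃ a ∈ A, ∃ b ∈ A, x ∈ segment ℝ a b := by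
  by_cases hxA : x ∈ A
  · exact ⟨x, hxA, x, hxA, left_mem_segment ℝ x x⟩
  have hAne : A.Nonempty := convexHull_nonempty_iff.mp ⟨x, hx⟩
  obtain ⟨a₀, ha₀⟩ := hAne
  by_contra hcon
  push_neg at hcon
  have ha₀x : a₀ - x ≠ 0 := sub_ne_zero.mpr (fun h => hxA (h ▸ ha₀))
  have habs : (0:ℝ) < abs (a₀ - x) := AbsoluteValue.pos _ ha₀x
  obtain ⟨u₀, hu₀def⟩ : ∃ u : ℂ, u = (a₀ - x) / (abs (a₀ - x) : ℂ) := ⟨_, rfl⟩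
  have hu₀abs : abs u₀ = 1 := by
    rw [hu₀def, map_div₀, Complex.abs_ofReal, _root_.abs_of_pos habs]
    exact div_self habs.ne'
  have hu₀ne : u₀ ≠ 0 := fun h => by simp [h] at hu₀abs
  obtain ⟨ψ, hψdef⟩ : ∃ ψ : ℂ → ℂ, ψ = fun z => (z - x) / u₀ := ⟨_, rfl⟩
  have hψapp : ∀ z, ψ z = (z - x) / u₀ := fun z => by rw [hψdef]
  have hψcont : Continuous ψ := by
    rw [hψdef]; exact (continuous_id.sub continuous_const).div_const u₀
  have hψ_eq : ∀ z, z - x = ψ z * u₀ := by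
    intro z; rw [hψapp]; field_simp
  have hψa₀ : ψ a₀ = (abs (a₀ - x) : ℂ) := by
    rw [hψapp, hu₀def]
    field_simp
  have hψne : ∀ z ∈ A, ψ z ≠ 0 := by
    intro z hz h0
    have : z - x = 0 := by rw [hψ_eq z, h0, zero_mul]
    exact hxA (sub_eq_zero.mp this ▸ hz)
  have miniseg : ∀ z ∈ A, ∀ w ∈ A, ∀ (u : ℂ) (r s : ℝ), r ≤ 0 → 0 ≤ s →
      z - x = (r:ℂ) * u → w - x = (s:ℂ) * u → False := by
    intro z hz w hw u r s hr hs hzu hwu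
    rcases eq_or_lt_of_le hr with hr0 | hrneg
    · have : z - x = 0 := by rw [hzu, hr0]; simp
      exact hxA (sub_eq_zero.mp this ▸ hz)

    rcases eq_or_lt_of_le hs with hs0 | hspos
    · have : w - x = 0 := by rw [hwu, ← hs0]; simp
      exact hxA (sub_eq_zero.mp this ▸ hw)
    have hsr : (0:ℝ) < s - r := by linarith
    refine hcon z hz w hw ⟨s/(s-r), -r/(s-r), div_nonneg hspos.le hsr.le,
      div_nonneg (by linarith) hsr.le, by field_simp; ring, ?_⟩
    have hz' : z = x + (r:ℂ) * u := by linear_combination hzu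
    have hw' : w = x + (s:ℂ) * u := by linear_combination hwu
    rw [hz', hw', Complex.real_smul, Complex.real_smul]
    have hsrC : ((s:ℂ) - r) ≠ 0 := by
      rw [← Complex.ofReal_sub]; exact_mod_cast hsr.ne'
    push_cast
    field_simp
    ring
  have hslit : ∀ z ∈ A, ψ z ∈ slitPlane := by
    intro z hz
    by_contra hns
    rw [mem_slitPlane_iff] at hns
    push_neg at hns
    have hzr : ψ z = ((ψ z).re : ℂ) := Complex.ext (by simp) (by simp [hns.2])
    exact miniseg z hz a₀ ha₀ u₀ (ψ z).re (abs (a₀ - x)) hns.1 habs.le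
      (by rw [← hzr]; exact hψ_eq z) (by rw [← hψa₀]; exact hψ_eq a₀)
  obtain ⟨φ, hφdef⟩ : ∃ φ : ℂ → ℝ, φ = fun z => (ψ z).arg := ⟨_, rfl⟩
  have hφapp : ∀ z, φ z = (ψ z).arg := fun z => by rw [hφdef]
  have hφcont : ContinuousOn φ A := by
    rw [hφdef]
    intro z hz
    exact ((Complex.continuousAt_arg (hslit z hz)).comp hψcont.continuousAt).continuousWithinAt
  have hφlt : ∀ z ∈ A, φ z < Real.pi := by
    intro z hz
    rw [hφapp]
    exact lt_of_le_of_ne (Complex.arg_le_pi _) (Complex.slitPlane_arg_ne_pi (hslit z hz))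
  have hφgt : ∀ z, -Real.pi < φ z := fun z => by rw [hφapp]; exact Complex.neg_pi_lt_arg _
  obtain ⟨z₁, hz₁A, hmin⟩ := hc.exists_isMinOn ⟨a₀, ha₀⟩ hφcont
  obtain ⟨z₂, hz₂A, hmax⟩ := hc.exists_isMaxOn ⟨a₀, ha₀⟩ hφcont
  rw [isMinOn_iff] at hmin
  rw [isMaxOn_iff] at hmax
  have hψpolar : ∀ z, ψ z = (abs (ψ z) : ℂ) * Complex.exp ((φ z : ℝ) * Complex.I) := by
    intro z; rw [hφapp]; exact (Complex.abs_mul_exp_arg_mul_I (ψ z)).symm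
  by_cases hbig : Real.pi ≤ φ z₂ - φ z₁
  · have hIVT := hA.intermediate_value hz₁A hz₂A hφcont
    obtain ⟨z₃, hz₃A, hz₃⟩ := hIVT (⟨by linarith [Real.pi_pos], by linarith⟩ :
      (φ z₁ + Real.pi) ∈ Set.Icc (φ z₁) (φ z₂))
    have hexp : Complex.exp (((φ z₁ + Real.pi : ℝ) : ℂ) * Complex.I)
        = - Complex.exp ((φ z₁ : ℝ) * Complex.I) := by
      push_cast
      rw [add_mul, Complex.exp_add, Complex.exp_pi_mul_I]
      ring
    have hψz₃ : ψ z₃ = ((-(abs (ψ z₃)) : ℝ) : ℂ) * Complex.exp ((φ z₁ : ℝ) * Complex.I) := by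
      have h := hψpolar z₃
      rw [hz₃, hexp] at h
      rw [Complex.ofReal_neg]
      linear_combination h
    have e3 : z₃ - x = ((-(abs (ψ z₃)) : ℝ) : ℂ) * (Complex.exp ((φ z₁ : ℝ) * Complex.I) * u₀) := by
      have h := hψ_eq z₃
      rw [hψz₃] at h
      rw [h]; ring
    have e1 : z₁ - x = ((abs (ψ z₁) : ℝ) : ℂ) * (Complex.exp ((φ z₁ : ℝ) * Complex.I) * u₀) := by
      have h := hψ_eq z₁
      rw [hψpolar z₁] at h
      rw [h]; ring
    exact miniseg z₃ hz₃A z₁ hz₁A (Complex.exp ((φ z₁ : ℝ) * Complex.I) * u₀)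
      (-(abs (ψ z₃))) (abs (ψ z₁)) (neg_nonpos.mpr (AbsoluteValue.nonneg _ _))
      (AbsoluteValue.nonneg _ _) e3 e1
  · push_neg at hbig
    obtain ⟨m, hmdef⟩ : ∃ m : ℝ, m = (φ z₁ + φ z₂)/2 := ⟨_, rfl⟩
    obtain ⟨δ, hδdef⟩ : ∃ d : ℝ, d = (φ z₂ - φ z₁)/2 := ⟨_, rfl⟩
    have hz₁₂ : φ z₁ ≤ φ z₂ := hmin z₂ hz₂A
    have hδ0 : 0 ≤ δ := by rw [hδdef]; linarith
    have hδlt : δ < Real.pi/2 := by rw [hδdef]; linarith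
    have hcosδ : 0 < Real.cos δ := Real.cos_pos_of_mem_Ioo ⟨by linarith, hδlt⟩
    obtain ⟨c, hcdef⟩ : ∃ c : ℂ, c = u₀⁻¹ * Complex.exp (((-m : ℝ) : ℂ) * Complex.I) := ⟨_, rfl⟩
    obtain ⟨F, hFdef⟩ : ∃ F : ℂ → ℝ, F = fun v => (v * c).re := ⟨_, rfl⟩
    have hFapp : ∀ v, F v = (v * c).re := fun v => by rw [hFdef]
    have hFlin : IsLinearMap ℝ F := by
      constructor
      · intro v w; rw [hFapp, hFapp, hFapp, add_mul, Complex.add_re]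
      · intro r v
        rw [hFapp, hFapp, Complex.real_smul, smul_eq_mul, mul_assoc, Complex.re_ofReal_mul]
    have hFsub : ∀ v w, F (v - w) = F v - F w := by
      intro v w; rw [hFapp, hFapp, hFapp, sub_mul, Complex.sub_re]
    have hFval : ∀ z ∈ A, F (z - x) = abs (ψ z) * Real.cos (φ z - m) := by
      intro z hz
      have h1 : (z - x) * c = ψ z * Complex.exp (((-m : ℝ) : ℂ) * Complex.I) := by
        rw [hψ_eq z, hcdef]
        calc ψ z * u₀ * (u₀⁻¹ * Complex.exp (((-m : ℝ) : ℂ) * Complex.I))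
            = ψ z * Complex.exp (((-m : ℝ) : ℂ) * Complex.I) * (u₀ * u₀⁻¹) := by ring
          _ = _ := by rw [mul_inv_cancel₀ hu₀ne, mul_one]
      have hexps : ((φ z : ℝ) : ℂ) * Complex.I + ((-m : ℝ) : ℂ) * Complex.I
          = ((φ z - m : ℝ) : ℂ) * Complex.I := by push_cast; ring
      have h2 : ψ z * Complex.exp (((-m : ℝ) : ℂ) * Complex.I)
          = ((abs (ψ z) : ℝ) : ℂ) * Complex.exp (((φ z - m : ℝ) : ℂ) * Complex.I) := by
        conv_lhs => rw [hψpolar z]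
        rw [mul_assoc, ← Complex.exp_add, hexps]
      rw [hFapp, h1, h2, Complex.re_ofReal_mul, Complex.exp_ofReal_mul_I_re]
    obtain ⟨zm, hzmA, hzmmin⟩ := hc.exists_isMinOn ⟨a₀, ha₀⟩
      ((Complex.continuous_abs.comp hψcont).continuousOn)
    rw [isMinOn_iff] at hzmmin
    have hεpos : 0 < abs (ψ zm) := AbsoluteValue.pos _ (hψne zm hzmA)
    have hcosb : ∀ z ∈ A, Real.cos δ ≤ Real.cos (φ z - m) := by
      intro z hz
      have h1 : |φ z - m| ≤ δ := by
        rw [abs_le, hmdef, hδdef]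
        constructor
        · have := hmin z hz; linarith
        · have := hmax z hz; linarith
      calc Real.cos δ ≤ Real.cos |φ z - m| :=
            Real.cos_le_cos_of_nonneg_of_le_pi (abs_nonneg _) (by linarith [Real.pi_pos]) h1
        _ = Real.cos (φ z - m) := Real.cos_abs _
    have hlower : ∀ z ∈ A, F x + abs (ψ zm) * Real.cos δ ≤ F z := by
      intro z hz
      have h2 : abs (ψ zm) * Real.cos δ ≤ abs (ψ z) * Real.cos (φ z - m) :=
        mul_le_mul (hzmmin z hz) (hcosb z hz) hcosδ.le (AbsoluteValue.nonneg _ _)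
      have h3 : F z - F x = abs (ψ z) * Real.cos (φ z - m) := by
        rw [← hFsub]; exact hFval z hz
      linarith
    have hhull : convexHull ℝ A ⊆ {v : ℂ | F x + abs (ψ zm) * Real.cos δ ≤ F v} :=
      convexHull_min hlower (convex_halfSpace_ge hFlin _)
    have := hhull hx
    simp only [Set.mem_setOf_eq] at this
    nlinarith

private lemma two_point (A : Set (ℝ × ℝ)) (hA : IsPreconnected A) (hc : IsCompact A)
    {x : ℝ × ℝ} (hx : x ∈ convexHull ℝ A) : ∃ a ∈ A, ∃ b ∈ A, x ∈ segment ℝ a b := by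
  set e := Complex.equivRealProdCLM
  have himg : (⇑e.symm) '' (convexHull ℝ A) = convexHull ℝ ((⇑e.symm) '' A) := by
    simpa using e.symm.toLinearEquiv.toLinearMap.image_convexHull A
  have hx' : e.symm x ∈ convexHull ℝ ((⇑e.symm) '' A) := by
    rw [← himg]; exact Set.mem_image_of_mem _ hx
  obtain ⟨a', ha', b', hb', hmem⟩ := two_point_complex ((⇑e.symm) '' A)
    (hA.image _ e.symm.continuous.continuousOn) (hc.image e.symm.continuous) hx'
  obtain ⟨a, haA, rfl⟩ := ha'
  obtain ⟨b, hbA, rfl⟩ := hb'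
  refine ⟨a, haA, b, hbA, ?_⟩
  have : (⇑e) '' segment ℝ (e.symm a) (e.symm b) = segment ℝ a b := by
    have := image_segment ℝ (e.toLinearEquiv.toLinearMap.toAffineMap) (e.symm a) (e.symm b)
    simpa using this
  rw [← this]
  exact ⟨e.symm x, hmem, e.apply_symm_apply x⟩

private lemma meet (R S : Set (ℝ × ℝ)) (hRc : IsCompact R) (hSc : IsCompact S)
    (hRp : IsPreconnected R) (hSp : IsPreconnected S)
    (hint : (convexHull ℝ R ∩ convexHull ℝ S).Nonempty) :
    (R ∩ convexHull ℝ S).Nonempty ∨ (S ∩ convexHull ℝ R).Nonempty := by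
  by_contra hcontra
  have hRS1 : ∀ z ∈ R, z ∉ convexHull ℝ S := fun z hz hz' =>
    hcontra (Or.inl ⟨z, hz, hz'⟩)
  have hRS2 : ∀ z ∈ S, z ∉ convexHull ℝ R := fun z hz hz' =>
    hcontra (Or.inr ⟨z, hz, hz'⟩)
  obtain ⟨x, hxR, hxS⟩ := hint
  obtain ⟨u, huS, v, hvS, hxuv⟩ := two_point S hSp hSc hxS
  have huv : u ≠ v := by
    rintro rfl
    rw [segment_same] at hxuv
    exact hRS2 u huS (hxuv ▸ hxR)
  obtain ⟨α, hαdef⟩ : ∃ a : ℝ, a = u.2 - v.2 := ⟨_, rfl⟩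
  obtain ⟨β, hβdef⟩ : ∃ b : ℝ, b = v.1 - u.1 := ⟨_, rfl⟩
  obtain ⟨f, hfdef⟩ : ∃ f : ℝ × ℝ → ℝ, f = fun z => α*z.1+β*z.2 := ⟨_, rfl⟩
  obtain ⟨h, hhdef⟩ : ∃ h : ℝ × ℝ → ℝ, h = fun z => -β*z.1+α*z.2 := ⟨_, rfl⟩
  have hfapp : ∀ z, f z = α*z.1+β*z.2 := fun z => by rw [hfdef]
  have hhapp : ∀ z, h z = -β*z.1+α*z.2 := fun z => by rw [hhdef]
  have hne : ¬(α = 0 ∧ β = 0) := by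
    rintro ⟨h1, h2⟩
    apply huv
    apply Prod.ext
    · rw [hβdef] at h2; linarith
    · rw [hαdef] at h1; linarith
  have seg' : ∀ {z w y : ℝ × ℝ}, f z = f y → f w = f y → h z ≤ h y → h y ≤ h w →
      y ∈ segment ℝ z w := by
    intro z w y h1 h2 h3 h4
    rw [hfapp, hfapp] at h1 h2
    rw [hhapp, hhapp] at h3 h4
    exact aux_seg α β hne h1 h2 h3 h4
  have hfuv : f v = f u := by rw [hfapp, hfapp, hαdef, hβdef]; ring
  have hhvu : h v < h u := by
    rw [hhapp, hhapp, hαdef, hβdef]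
    have hne2 : ¬((v.1 - u.1) = 0 ∧ (v.2 - u.2) = 0) := by
      rintro ⟨e1, e2⟩
      exact huv (Prod.ext (by linarith) (by linarith))
    rcases not_and_or.mp hne2 with hd | hd
    · have : 0 < (v.1-u.1)^2 := by positivity
      nlinarith [sq_nonneg (v.2-u.2)]
    · have : 0 < (v.2-u.2)^2 := by positivity
      nlinarith [sq_nonneg (v.1-u.1)]
  obtain ⟨t1, t2, ht1, ht2, hsum, hcomb⟩ := hxuv
  have hx1 : x.1 = t1*u.1+t2*v.1 := by rw [← hcomb]; simp
  have hx2 : x.2 = t1*u.2+t2*v.2 := by rw [← hcomb]; simp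
  have hfx : f x = f u := by
    have hv' : α*v.1+β*v.2 = α*u.1+β*u.2 := by rw [← hfapp, ← hfapp]; exact hfuv
    rw [hfapp, hfapp, hx1, hx2]
    linear_combination t2 * hv' + (α*u.1 + β*u.2) * hsum
  have hhxcomb : h x = t1 * h u + (1 - t1) * h v := by
    have ht2' : t2 = 1 - t1 := by linarith
    rw [hhapp x, hhapp u, hhapp v, hx1, hx2, ← ht2']; ring
  have hhx1 : h v ≤ h x := by
    nlinarith [mul_nonneg ht1 (sub_nonneg.mpr hhvu.le)]
  have hhx2 : h x ≤ h u := by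
    nlinarith [mul_nonneg (by linarith : (0:ℝ) ≤ 1 - t1) (sub_nonneg.mpr hhvu.le)]
  have hfcont : Continuous f := by rw [hfdef]; fun_prop
  have hsegsubS : segment ℝ v u ⊆ convexHull ℝ S :=
    (convex_convexHull ℝ S).segment_subset (subset_convexHull ℝ S hvS) (subset_convexHull ℝ S huS)
  -- finisher for a single point of R on the line
  have caseA_fin : ∀ r, r ∈ R → f r = f u → False := by
    intro r hrR hfr
    rcases le_or_gt (h r) (h u) with h1 | h1
    · rcases le_or_gt (h v) (h r) with h2 | h2
      · -- r ∈ [v, u] ⊆ conv S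
        exact hRS1 r hrR (hsegsubS (seg' (hfuv.trans hfr.symm) (hfr ▸ rfl) h2 h1))
      · -- v ∈ [r, x] ⊆ conv R
        have hv' : v ∈ segment ℝ r x := seg' (hfr.trans (hfuv.symm.trans (by rw [hfuv])))
          (by rw [hfx, hfuv]) h2.le hhx1
        have : v ∈ segment ℝ r x → v ∈ convexHull ℝ R := fun hm =>
          (convex_convexHull ℝ R).segment_subset (subset_convexHull ℝ R hrR) hxR hm
        exact hRS2 v hvS (this hv')
    · -- u ∈ [x, r] ⊆ conv R
      have hu' : u ∈ segment ℝ x r := seg' (by rw [hfx]) (by rw [hfr]) hhx2 h1.le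
      exact hRS2 u huS ((convex_convexHull ℝ R).segment_subset hxR (subset_convexHull ℝ R hrR) hu')
  -- finisher for a pair of points of R on the line straddling x
  have keyB : ∀ p q : ℝ × ℝ, p ∈ R → q ∈ R → f p = f u → f q = f u →
      h p ≤ h x → h x ≤ h q → False := by
    intro p q hpR hqR hfp hfq hhp hhq
    by_cases hvp : h v ≤ h p
    · exact hRS1 p hpR (hsegsubS (seg' (hfuv.trans hfp.symm) (by rw [hfp]) hvp (by linarith)))
    · push_neg at hvp
      by_cases hqu : h q ≤ h u
      · exact hRS1 q hqR (hsegsubS (seg' (hfuv.trans hfq.symm) (by rw [hfq]) (by linarith) hqu))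
      · push_neg at hqu
        have hu' : u ∈ segment ℝ p q := seg' (by rw [hfp]) (by rw [hfq]) (by linarith) (by linarith)
        exact hRS2 u huS ((convex_convexHull ℝ R).segment_subset
          (subset_convexHull ℝ R hpR) (subset_convexHull ℝ R hqR) hu')
  -- case analysis on which side of the line conv R lies
  by_cases hA1 : ∃ p' ∈ R, f u < f p'
  · by_cases hA2 : ∃ q' ∈ R, f q' < f u
    · obtain ⟨p', hp'R, hp'f⟩ := hA1
      obtain ⟨q', hq'R, hq'f⟩ := hA2
      obtain ⟨r, hrR, hfr⟩ := hRp.intermediate_value hq'R hp'R hfcont.continuousOn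
        (⟨hq'f.le, hp'f.le⟩ : f u ∈ Set.Icc (f q') (f p'))
      exact caseA_fin r hrR hfr
    · push_neg at hA2
      -- all of R satisfies f u ≤ f ⬝
      obtain ⟨p, hpR, q, hqR, hxpq⟩ := two_point R hRp hRc hxR
      obtain ⟨s1, s2, hs1, hs2, hssum, hscomb⟩ := hxpq
      have hxp1 : x.1 = s1*p.1+s2*q.1 := by rw [← hscomb]; simp
      have hxp2 : x.2 = s1*p.2+s2*q.2 := by rw [← hscomb]; simp
      have hfcomb : f x = s1 * f p + s2 * f q := by
        rw [hfapp x, hfapp p, hfapp q, hxp1, hxp2]; ring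
      have hhcomb : h x = s1 * h p + (1 - s1) * h q := by
        have hs2' : s2 = 1 - s1 := by linarith
        rw [hhapp x, hhapp p, hhapp q, hxp1, hxp2, ← hs2']; ring
      have hs1le1 : s1 ≤ 1 := by linarith
      rcases eq_or_lt_of_le hs1 with hs10 | hs1pos
      · have hxq : x = q := by
          rw [← hscomb, ← hs10]
          have : s2 = 1 := by linarith
          rw [this]; simp
        exact hRS1 x (hxq ▸ hqR) hxS
      rcases eq_or_lt_of_le hs2 with hs20 | hs2pos
      · have hxp : x = p := by
          rw [← hscomb, ← hs20]
          have : s1 = 1 := by linarith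
          rw [this]; simp
        exact hRS1 x (hxp ▸ hpR) hxS
      have e : s1*(f u - f p) + s2*(f u - f q) = 0 := by
        linear_combination (f u)*hssum + hfcomb - hfx
      have hfpu : f p = f u := by
        have h4 : s1*(f u - f p) ≤ 0 := mul_nonpos_of_nonneg_of_nonpos hs1pos.le
          (by linarith [hA2 p hpR])
        have h5 : s2*(f u - f q) ≤ 0 := mul_nonpos_of_nonneg_of_nonpos hs2pos.le
          (by linarith [hA2 q hqR])
        have h6 : s1*(f u - f p) = 0 := by linarith
        rcases mul_eq_zero.mp h6 with h7 | h7
        · exact absurd h7 hs1pos.ne'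
        · linarith
      have hfqu : f q = f u := by
        have h4 : s1*(f u - f p) ≤ 0 := mul_nonpos_of_nonneg_of_nonpos hs1pos.le
          (by linarith [hA2 p hpR])
        have h5 : s2*(f u - f q) ≤ 0 := mul_nonpos_of_nonneg_of_nonpos hs2pos.le
          (by linarith [hA2 q hqR])
        have h6 : s2*(f u - f q) = 0 := by linarith
        rcases mul_eq_zero.mp h6 with h7 | h7
        · exact absurd h7 hs2pos.ne'
        · linarith
      have e1 : h x - h q = s1 * (h p - h q) := by linear_combination hhcomb
      have e3 : h p - h x = (1 - s1) * (h p - h q) := by linear_combination -hhcomb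
      rcases le_total (h p) (h q) with hpq | hpq
      · have e2 : (1 - s1) * (h p - h q) ≤ 0 :=
          mul_nonpos_of_nonneg_of_nonpos (by linarith) (by linarith)
        have e4 : s1 * (h p - h q) ≤ 0 :=
          mul_nonpos_of_nonneg_of_nonpos hs1pos.le (by linarith)
        exact keyB p q hpR hqR hfpu hfqu (by linarith) (by linarith)
      · have e2 : 0 ≤ s1 * (h p - h q) := mul_nonneg hs1pos.le (by linarith)
        have e4 : 0 ≤ (1 - s1) * (h p - h q) := mul_nonneg (by linarith) (by linarith)
        exact keyB q p hqR hpR hfqu hfpu (by linarith) (by linarith)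
  · push_neg at hA1
    obtain ⟨p, hpR, q, hqR, hxpq⟩ := two_point R hRp hRc hxR
    obtain ⟨s1, s2, hs1, hs2, hssum, hscomb⟩ := hxpq
    have hxp1 : x.1 = s1*p.1+s2*q.1 := by rw [← hscomb]; simp
    have hxp2 : x.2 = s1*p.2+s2*q.2 := by rw [← hscomb]; simp
    have hfcomb : f x = s1 * f p + s2 * f q := by
      rw [hfapp x, hfapp p, hfapp q, hxp1, hxp2]; ring
    have hhcomb : h x = s1 * h p + (1 - s1) * h q := by
      have hs2' : s2 = 1 - s1 := by linarith
      rw [hhapp x, hhapp p, hhapp q, hxp1, hxp2, ← hs2']; ring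
    have hs1le1 : s1 ≤ 1 := by linarith
    rcases eq_or_lt_of_le hs1 with hs10 | hs1pos
    · have hxq : x = q := by
        rw [← hscomb, ← hs10]
        have : s2 = 1 := by linarith
        rw [this]; simp
      exact hRS1 x (hxq ▸ hqR) hxS
    rcases eq_or_lt_of_le hs2 with hs20 | hs2pos
    · have hxp : x = p := by
        rw [← hscomb, ← hs20]
        have : s1 = 1 := by linarith
        rw [this]; simp
      exact hRS1 x (hxp ▸ hpR) hxS
    have e : s1*(f u - f p) + s2*(f u - f q) = 0 := by
      linear_combination (f u)*hssum + hfcomb - hfx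
    have hfpu : f p = f u := by
      have h4 : 0 ≤ s1*(f u - f p) := mul_nonneg hs1pos.le (by linarith [hA1 p hpR])
      have h5 : 0 ≤ s2*(f u - f q) := mul_nonneg hs2pos.le (by linarith [hA1 q hqR])
      have h6 : s1*(f u - f p) = 0 := by linarith
      rcases mul_eq_zero.mp h6 with h7 | h7
      · exact absurd h7 hs1pos.ne'
      · linarith
    have hfqu : f q = f u := by
      have h4 : 0 ≤ s1*(f u - f p) := mul_nonneg hs1pos.le (by linarith [hA1 p hpR])
      have h5 : 0 ≤ s2*(f u - f q) := mul_nonneg hs2pos.le (by linarith [hA1 q hqR])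
      have h6 : s2*(f u - f q) = 0 := by linarith
      rcases mul_eq_zero.mp h6 with h7 | h7
      · exact absurd h7 hs2pos.ne'
      · linarith
    have e1 : h x - h q = s1 * (h p - h q) := by linear_combination hhcomb
    have e3 : h p - h x = (1 - s1) * (h p - h q) := by linear_combination -hhcomb
    rcases le_total (h p) (h q) with hpq | hpq
    · have e2 : (1 - s1) * (h p - h q) ≤ 0 :=
        mul_nonpos_of_nonneg_of_nonpos (by linarith) (by linarith)
      have e4 : s1 * (h p - h q) ≤ 0 :=
        mul_nonpos_of_nonneg_of_nonpos hs1pos.le (by linarith)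
      exact keyB p q hpR hqR hfpu hfqu (by linarith) (by linarith)
    · have e2 : 0 ≤ s1 * (h p - h q) := mul_nonneg hs1pos.le (by linarith)
      have e4 : 0 ≤ (1 - s1) * (h p - h q) := mul_nonneg (by linarith) (by linarith)
      exact keyB q p hqR hpR hfqu hfpu (by linarith) (by linarith)

private lemma frontier_structure (Q : Set (ℝ × ℝ)) (hQconv : Convex ℝ Q) (hQcomp : IsCompact Q)
    (hQint : (interior Q).Nonempty) {x : ℝ × ℝ} (hx : x ∈ frontier Q) :
    x ∈ Set.extremePoints ℝ Q ∨
      ∃ p q, AdjacentHullVertices Q p q ∧ x ∈ openSegment ℝ p q := by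
  have hQcl : IsClosed Q := hQcomp.isClosed
  rw [hQcl.frontier_eq] at hx
  obtain ⟨hxQ, hxni⟩ := hx
  obtain ⟨fcl, hfcl⟩ := geometric_hahn_banach_open_point hQconv.interior isOpen_interior hxni
  obtain ⟨o, ho⟩ := hQint
  have hfo : fcl o < fcl x := hfcl o ho
  obtain ⟨α, hαdef⟩ : ∃ a : ℝ, a = fcl (1, 0) := ⟨_, rfl⟩
  obtain ⟨β, hβdef⟩ : ∃ b : ℝ, b = fcl (0, 1) := ⟨_, rfl⟩
  obtain ⟨f, hfdef⟩ : ∃ f : ℝ × ℝ → ℝ, f = fun z => α*z.1+β*z.2 := ⟨_, rfl⟩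
  obtain ⟨h, hhdef⟩ : ∃ h : ℝ × ℝ → ℝ, h = fun z => -β*z.1+α*z.2 := ⟨_, rfl⟩
  have hfapp : ∀ z, f z = α*z.1+β*z.2 := fun z => by rw [hfdef]
  have hhapp : ∀ z, h z = -β*z.1+α*z.2 := fun z => by rw [hhdef]
  have hf_eq : ∀ z, f z = fcl z := by
    intro z
    have hz : z = z.1 • ((1:ℝ), (0:ℝ)) + z.2 • ((0:ℝ), (1:ℝ)) := by
      apply Prod.ext <;> simp
    rw [hfapp]
    conv_rhs => rw [hz]
    rw [map_add, map_smul, map_smul, smul_eq_mul, smul_eq_mul, ← hαdef, ← hβdef]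
    ring
  have hne : ¬(α = 0 ∧ β = 0) := by
    rintro ⟨h1, h2⟩
    have h3 : fcl o = 0 := by rw [← hf_eq, hfapp, h1, h2]; ring
    have h4 : fcl x = 0 := by rw [← hf_eq, hfapp, h1, h2]; ring
    rw [h3, h4] at hfo
    exact lt_irrefl _ hfo
  -- f ≤ f x on all of Q
  have hQle : ∀ a ∈ Q, f a ≤ f x := by
    have hsub : Q ⊆ closure (interior Q) := by
      intro a ha
      have hseg : openSegment ℝ o a ⊆ interior Q :=
        hQconv.openSegment_interior_closure_subset_interior ho (subset_closure ha)
      have : a ∈ closure (openSegment ℝ o a) := by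
        rw [closure_openSegment]
        exact right_mem_segment ℝ o a
      exact closure_mono hseg this
    intro a ha
    have h1 : interior Q ⊆ {z | fcl z ≤ fcl x} := fun z hz => (hfcl z hz).le
    have h2 : IsClosed {z : ℝ × ℝ | fcl z ≤ fcl x} := isClosed_le fcl.continuous continuous_const
    have h3 := closure_minimal h1 h2 (hsub ha)
    rw [hf_eq, hf_eq]
    exact h3
  have hfcont : Continuous f := by rw [hfdef]; fun_prop
  have hhcont : Continuous h := by rw [hhdef]; fun_prop
  obtain ⟨F, hFdef⟩ : ∃ F : Set (ℝ × ℝ), F = Q ∩ {z | f z = f x} := ⟨_, rfl⟩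
  have hFQ : F ⊆ Q := by rw [hFdef]; exact Set.inter_subset_left
  have hmemF : ∀ {z}, z ∈ F → f z = f x := by
    intro z hz; rw [hFdef] at hz; exact hz.2
  have hmemF' : ∀ {z}, z ∈ Q → f z = f x → z ∈ F := by
    intro z h1 h2; rw [hFdef]; exact ⟨h1, h2⟩
  have hFcomp : IsCompact F := by
    rw [hFdef]
    exact hQcomp.inter_right (isClosed_eq hfcont continuous_const)
  have hxF : x ∈ F := hmemF' hxQ rfl
  obtain ⟨p, hpF, hpmin⟩ := hFcomp.exists_isMinOn ⟨x, hxF⟩ hhcont.continuousOn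
  obtain ⟨q, hqF, hqmax⟩ := hFcomp.exists_isMaxOn ⟨x, hxF⟩ hhcont.continuousOn
  rw [isMinOn_iff] at hpmin
  rw [isMaxOn_iff] at hqmax
  have hFsub : F ⊆ frontier Q := by
    intro z hz
    rw [hQcl.frontier_eq]
    refine ⟨hFQ hz, fun hzi => ?_⟩
    have h1 : fcl z < fcl x := hfcl z hzi
    have h2 : f z = f x := hmemF hz
    rw [hf_eq, hf_eq] at h2
    exact absurd h2 h1.ne
  have hsegF : segment ℝ p q ⊆ F := by
    intro y hy
    obtain ⟨a, b, ha, hb, hab, hcomb⟩ := hy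
    refine hmemF' (hQconv.segment_subset (hFQ hpF) (hFQ hqF) ⟨a, b, ha, hb, hab, hcomb⟩) ?_
    have hy1 : y.1 = a*p.1+b*q.1 := by rw [← hcomb]; simp
    have hy2 : y.2 = a*p.2+b*q.2 := by rw [← hcomb]; simp
    have hp' : f p = f x := hmemF hpF
    have hq' : f q = f x := hmemF hqF
    rw [hfapp] at hp' hq' ⊢
    rw [hy1, hy2]
    linear_combination a*hp' + b*hq' + (f x)*hab
  -- extremality of p and q
  have hext : ∀ r, r ∈ F → (∀ z ∈ F, h r ≤ h z) ∨ (∀ z ∈ F, h z ≤ h r) →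
      r ∈ Set.extremePoints ℝ Q := by
    intro r hrF hrext
    refine ⟨hFQ hrF, ?_⟩
    intro s hs t ht hmem
    obtain ⟨a, b, ha, hb, hab, hcomb⟩ := hmem
    have hr1 : r.1 = a*s.1+b*t.1 := by rw [← hcomb]; simp
    have hr2 : r.2 = a*s.2+b*t.2 := by rw [← hcomb]; simp
    have hfr : f r = f x := hmemF hrF
    have hfs : f s ≤ f x := hQle s hs
    have hft : f t ≤ f x := hQle t ht
    have hfcomb : f r = a * f s + b * f t := by
      rw [hfapp r, hfapp s, hfapp t, hr1, hr2]; ring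
    have hfs' : f s = f x := by
      by_contra hne'
      have h1 : f s < f x := lt_of_le_of_ne hfs hne'
      have h2 : a * f s + b * f t < a * f x + b * f x :=
        add_lt_add_of_lt_of_le (by exact mul_lt_mul_of_pos_left h1 ha)
          (mul_le_mul_of_nonneg_left hft hb.le)
      rw [← hfcomb, hfr] at h2
      have h3 : a * f x + b * f x = f x := by linear_combination (f x)*hab
      linarith
    have hft' : f t = f x := by
      by_contra hne'
      have h1 : f t < f x := lt_of_le_of_ne hft hne'
      have h2 : a * f s + b * f t < a * f x + b * f x :=
        add_lt_add_of_le_of_lt (mul_le_mul_of_nonneg_left hfs ha.le)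
          (by exact mul_lt_mul_of_pos_left h1 hb)
      rw [← hfcomb, hfr] at h2
      have h3 : a * f x + b * f x = f x := by linear_combination (f x)*hab
      linarith
    have hsF : s ∈ F := hmemF' hs hfs'
    have htF : t ∈ F := hmemF' ht hft'
    have hhcomb : h r = a * h s + b * h t := by
      rw [hhapp r, hhapp s, hhapp t, hr1, hr2]; ring
    have hhs : h s = h r ∧ h t = h r := by
      have e : a*(h s - h r) + b*(h t - h r) = 0 := by
        linear_combination -hhcomb - (h r)*hab
      rcases hrext with hmin | hmax
      · have h1 : 0 ≤ a*(h s - h r) := mul_nonneg ha.le (by linarith [hmin s hsF])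
        have h2 : 0 ≤ b*(h t - h r) := mul_nonneg hb.le (by linarith [hmin t htF])
        have e1 : a*(h s - h r) = 0 := by linarith
        have e2 : b*(h t - h r) = 0 := by linarith
        constructor
        · rcases mul_eq_zero.mp e1 with hz | hz
          · exact absurd hz ha.ne'
          · linarith
        · rcases mul_eq_zero.mp e2 with hz | hz
          · exact absurd hz hb.ne'
          · linarith
      · have h1 : a*(h s - h r) ≤ 0 := mul_nonpos_of_nonneg_of_nonpos ha.le (by linarith [hmax s hsF])
        have h2 : b*(h t - h r) ≤ 0 := mul_nonpos_of_nonneg_of_nonpos hb.le (by linarith [hmax t htF])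
        have e1 : a*(h s - h r) = 0 := by linarith
        have e2 : b*(h t - h r) = 0 := by linarith
        constructor
        · rcases mul_eq_zero.mp e1 with hz | hz
          · exact absurd hz ha.ne'
          · linarith
        · rcases mul_eq_zero.mp e2 with hz | hz
          · exact absurd hz hb.ne'
          · linarith
    have hseq : s = r := by
      apply aux_inj α β hne
      · rw [← hfapp s, ← hfapp r, hfs', hfr]
      · rw [← hhapp s, ← hhapp r, hhs.1]
    have hteq : t = r := by
      apply aux_inj α β hne
      · rw [← hfapp t, ← hfapp r, hft', hfr]
      · rw [← hhapp t, ← hhapp r, hhs.2]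
    exact hseq
  have hpext : p ∈ Set.extremePoints ℝ Q := hext p hpF (Or.inl hpmin)
  have hqext : q ∈ Set.extremePoints ℝ Q := hext q hqF (Or.inr hqmax)
  by_cases hxe : x ∈ Set.extremePoints ℝ Q
  · exact Or.inl hxe
  · right
    have hxseg : x ∈ segment ℝ p q := by
      apply aux_seg α β hne
      · rw [← hfapp p, ← hfapp x, hmemF hpF]
      · rw [← hfapp q, ← hfapp x, hmemF hqF]
      · rw [← hhapp p, ← hhapp x]; exact hpmin x hxF
      · rw [← hhapp q, ← hhapp x]; exact hqmax x hxF
    have hxp : x ≠ p := fun hh => hxe (hh ▸ hpext)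
    have hxq : x ≠ q := fun hh => hxe (hh ▸ hqext)
    have hpq : p ≠ q := by
      rintro rfl
      rw [segment_same] at hxseg
      exact hxp hxseg
    exact ⟨p, q, ⟨hpq, hpext, hqext, hsegF.trans hFsub⟩,
      mem_openSegment_of_ne_left_right (Ne.symm hxp) (Ne.symm hxq) hxseg⟩

private lemma collinear_hull (S : Set (ℝ × ℝ)) (hSp : IsPreconnected S) (hSc : IsCompact S)
    (hcol : Collinear ℝ S) : convexHull ℝ S ⊆ S := by
  intro y hy
  have hSne : S.Nonempty := convexHull_nonempty_iff.mp ⟨y, hy⟩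
  obtain ⟨p₀, d, hd⟩ := (collinear_iff_exists_forall_eq_smul_vadd (k := ℝ) S).mp hcol
  rcases eq_or_ne d 0 with rfl | hdne
  · have hsub : S ⊆ {p₀} := by
      intro z hz
      obtain ⟨r, hr⟩ := hd z hz
      simp at hr
      simp [hr]
    have h1 : convexHull ℝ S ⊆ {p₀} := convexHull_min hsub (convex_singleton p₀)
    have h2 : y = p₀ := h1 hy
    obtain ⟨s, hs⟩ := hSne
    have : s = p₀ := hsub hs
    rw [h2, ← this]
    exact hs
  · obtain ⟨L, hLdef⟩ : ∃ L : Set (ℝ × ℝ), L = {z | ∃ r : ℝ, z = r • d + p₀} := ⟨_, rfl⟩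
    have hSL : S ⊆ L := by
      intro z hz
      obtain ⟨r, hr⟩ := hd z hz
      rw [hLdef]
      exact ⟨r, by rw [hr]; rw [vadd_eq_add]⟩
    have hLconv : Convex ℝ L := by
      intro z hz w hw a b ha hb hab
      rw [hLdef] at hz hw ⊢
      obtain ⟨r1, hr1⟩ := hz
      obtain ⟨r2, hr2⟩ := hw
      refine ⟨a*r1 + b*r2, ?_⟩
      rw [hr1, hr2]
      have : a • (r1 • d + p₀) + b • (r2 • d + p₀)
          = (a*r1 + b*r2) • d + (a+b) • p₀ := by module
      rw [this, hab, one_smul]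
    have hyL : y ∈ L := convexHull_min hSL hLconv hy
    obtain ⟨ry, hry⟩ := hLdef ▸ hyL
    obtain ⟨ψ, hψdef⟩ : ∃ ψ : ℝ × ℝ → ℝ, ψ = fun z => d.1*z.1 + d.2*z.2 := ⟨_, rfl⟩
    have hψapp : ∀ z, ψ z = d.1*z.1 + d.2*z.2 := fun z => by rw [hψdef]
    have hψcont : Continuous ψ := by rw [hψdef]; fun_prop
    have hψlin : IsLinearMap ℝ ψ := by
      constructor
      · intro v w; rw [hψapp, hψapp, hψapp]; simp; ring
      · intro c v; rw [hψapp, hψapp]; simp [smul_eq_mul]; ring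
    obtain ⟨s₁, hs₁S, hmin⟩ := hSc.exists_isMinOn hSne hψcont.continuousOn
    obtain ⟨s₂, hs₂S, hmax⟩ := hSc.exists_isMaxOn hSne hψcont.continuousOn
    rw [isMinOn_iff] at hmin
    rw [isMaxOn_iff] at hmax
    have hy1 : ψ s₁ ≤ ψ y := by
      have : convexHull ℝ S ⊆ {z | ψ s₁ ≤ ψ z} :=
        convexHull_min (fun z hz => hmin z hz) (convex_halfSpace_ge hψlin _)
      exact this hy
    have hy2 : ψ y ≤ ψ s₂ := by
      have : convexHull ℝ S ⊆ {z | ψ z ≤ ψ s₂} :=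
        convexHull_min (fun z hz => hmax z hz) (convex_halfSpace_le hψlin _)
      exact this hy
    obtain ⟨s, hsS, hψs⟩ := hSp.intermediate_value hs₁S hs₂S hψcont.continuousOn
      (⟨hy1, hy2⟩ : ψ y ∈ Set.Icc (ψ s₁) (ψ s₂))
    obtain ⟨rs, hrs⟩ := hLdef ▸ hSL hsS
    have hdd : (0:ℝ) < d.1^2 + d.2^2 := by
      have : ¬(d.1 = 0 ∧ d.2 = 0) := fun ⟨h1, h2⟩ => hdne (Prod.ext h1 h2)
      rcases not_and_or.mp this with hh | hh
      · have : 0 < d.1^2 := by positivity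
        nlinarith [sq_nonneg d.2]
      · have : 0 < d.2^2 := by positivity
        nlinarith [sq_nonneg d.1]
    have hval : ∀ r : ℝ, ψ (r • d + p₀) = r * (d.1^2 + d.2^2) + ψ p₀ := by
      intro r
      rw [hψapp, hψapp]
      simp [smul_eq_mul]
      ring
    have : rs = ry := by
      have e1 : ψ s = rs * (d.1^2 + d.2^2) + ψ p₀ := by rw [hrs]; exact hval rs
      have e2 : ψ y = ry * (d.1^2 + d.2^2) + ψ p₀ := by rw [hry]; exact hval ry
      have e3 : rs * (d.1^2 + d.2^2) = ry * (d.1^2 + d.2^2) := by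
        rw [hψs] at e1; linarith
      exact mul_right_cancel₀ hdd.ne' e3
    rw [hry, ← this, ← hrs]
    exact hsS

private lemma interior_hull_nonempty (S : Set (ℝ × ℝ)) (h : ¬ Collinear ℝ S) :
    (interior (convexHull ℝ S)).Nonempty := by
  rw [(convex_convexHull ℝ S).interior_nonempty_iff_affineSpan_eq_top, affineSpan_convexHull]
  have hSne : S.Nonempty := by
    rcases Set.eq_empty_or_nonempty S with rfl | hne
    · exact absurd (collinear_empty ℝ _) h
    · exact hne
  rw [AffineSubspace.affineSpan_eq_top_iff_vectorSpan_eq_top_of_nonempty ℝ (ℝ × ℝ) (ℝ × ℝ) hSne]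
  rw [Collinear] at h
  push_neg at h
  have hfin : FiniteDimensional ℝ (vectorSpan ℝ S) := inferInstance
  have h1 : 1 < Module.finrank ℝ (vectorSpan ℝ S) := by
    by_contra hle
    push_neg at hle
    have heq := Module.finrank_eq_rank ℝ (vectorSpan ℝ S)
    have h2 : Module.rank ℝ (vectorSpan ℝ S) ≤ 1 := by
      rw [← heq]; exact_mod_cast hle
    exact absurd h2 (not_le.mpr h)
  have h2 : Module.finrank ℝ (vectorSpan ℝ S) ≤ 2 := by
    have := Submodule.finrank_le (vectorSpan ℝ S)
    simpa using this
  apply Submodule.eq_top_of_finrank_eq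
  have : Module.finrank ℝ (ℝ × ℝ) = 2 := by simp
  omega

private lemma core (R S : Set (ℝ × ℝ)) (hRp : IsPreconnected R)
    (hSc : IsCompact S) (hSp : IsPreconnected S)
    (hQc : IsCompact (convexHull ℝ S))
    (hdisj : Disjoint R S)
    (hmeet : (R ∩ convexHull ℝ S).Nonempty) :
    convexHull ℝ R ⊆ interior (convexHull ℝ S) ∨
      ∃ p q, AdjacentHullVertices (convexHull ℝ S) p q ∧
        (openSegment ℝ p q ∩ R).Nonempty := by
  obtain ⟨z, hzR, hzQ⟩ := hmeet
  by_cases hRf : (R ∩ frontier (convexHull ℝ S)).Nonempty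
  · obtain ⟨x, hxR, hxf⟩ := hRf
    have hxS : x ∉ S := fun hxS => Set.disjoint_left.mp hdisj hxR hxS
    by_cases hcol : Collinear ℝ S
    · have hxQ : x ∈ convexHull ℝ S := by
        have : frontier (convexHull ℝ S) ⊆ convexHull ℝ S := hQc.isClosed.frontier_subset
        exact this hxf
      exact absurd (collinear_hull S hSp hSc hcol hxQ) hxS
    · have hint := interior_hull_nonempty S hcol
      rcases frontier_structure (convexHull ℝ S) (convex_convexHull ℝ S) hQc hint hxf with
        hxe | ⟨p, q, hadj, hopen⟩
      · exact absurd (extremePoints_convexHull_subset hxe) hxS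
      · exact Or.inr ⟨p, q, hadj, ⟨x, hopen, hxR⟩⟩
  · left
    have hzint : z ∈ interior (convexHull ℝ S) := by
      by_contra hzi
      have : z ∈ R ∩ frontier (convexHull ℝ S) := by
        rw [hQc.isClosed.frontier_eq]
        exact ⟨hzR, hzQ, hzi⟩
      exact hRf ⟨z, this⟩
    have hRsub : R ⊆ interior (convexHull ℝ S) ∪ (convexHull ℝ S)ᶜ := by
      intro w hw
      by_cases hwQ : w ∈ convexHull ℝ S
      · left
        by_contra hwi
        exact hRf ⟨w, hw, by rw [hQc.isClosed.frontier_eq]; exact ⟨hwQ, hwi⟩⟩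
      · right; exact hwQ
    have hdisj2 : Disjoint (interior (convexHull ℝ S)) (convexHull ℝ S)ᶜ :=
      Set.disjoint_left.mpr (fun w hw hw2 => hw2 (interior_subset hw))
    rcases hRp.subset_or_subset isOpen_interior (isOpen_compl_iff.mpr hQc.isClosed)
      hdisj2 hRsub with hsub | hsub
    · exact convexHull_min hsub (convex_convexHull ℝ S).interior
    · exact absurd hzQ (hsub hzR)

theorem blocked_or_nested
    (R S : Set (ℝ × ℝ)) (VR VS : Finset (ℝ × ℝ))
    (ER ES : Finset ((ℝ × ℝ) × (ℝ × ℝ)))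
    (hERV : ∀ e ∈ ER, e.1 ∈ VR ∧ e.2 ∈ VR)
    (hESV : ∀ e ∈ ES, e.1 ∈ VS ∧ e.2 ∈ VS)
    (hR : R = ⋃ e ∈ ER, segment ℝ e.1 e.2)
    (hS : S = ⋃ e ∈ ES, segment ℝ e.1 e.2)
    (hRne : R.Nonempty) (hSne : S.Nonempty)
    (hRcompact : IsCompact R) (hScompact : IsCompact S)
    (hRconn : IsConnected R) (hSconn : IsConnected S)
    (hRS : Disjoint R S)
    (hgen : ∀ p q r : ℝ × ℝ, p ∈ (VR : Set (ℝ × ℝ)) ∪ (VS : Set (ℝ × ℝ)) →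
      q ∈ (VR : Set (ℝ × ℝ)) ∪ (VS : Set (ℝ × ℝ)) →
      r ∈ (VR : Set (ℝ × ℝ)) ∪ (VS : Set (ℝ × ℝ)) →
      p ≠ q → q ≠ r → p ≠ r → ¬ Collinear ℝ ({p, q, r} : Set (ℝ × ℝ)))
    (hgenR : ∀ v ∈ VR, v ∉ frontier (convexHull ℝ S))
    (hgenS : ∀ v ∈ VS, v ∉ frontier (convexHull ℝ R))
    (hinter : (convexHull ℝ R ∩ convexHull ℝ S).Nonempty) :
    convexHull ℝ R ⊆ interior (convexHull ℝ S) ∨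
    convexHull ℝ S ⊆ interior (convexHull ℝ R) ∨
    (∃ p q : ℝ × ℝ, AdjacentHullVertices (convexHull ℝ S) p q ∧
      (openSegment ℝ p q ∩ R).Nonempty) ∨
    (∃ p q : ℝ × ℝ, AdjacentHullVertices (convexHull ℝ R) p q ∧
      (openSegment ℝ p q ∩ S).Nonempty) := by
  -- the convex hulls are hulls of finite vertex sets, hence compact
  have hullcomp : ∀ (T : Set (ℝ × ℝ)) (ET : Finset ((ℝ × ℝ) × (ℝ × ℝ))),
      T = ⋃ e ∈ ET, segment ℝ e.1 e.2 → IsCompact (convexHull ℝ T) := by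
    intro T ET hT
    obtain ⟨W, hWdef⟩ : ∃ W : Set (ℝ × ℝ),
        W = ((ET.image Prod.fst ∪ ET.image Prod.snd : Finset (ℝ × ℝ)) : Set (ℝ × ℝ)) := ⟨_, rfl⟩
    have hWfin : W.Finite := by rw [hWdef]; exact (ET.image Prod.fst ∪ ET.image Prod.snd).finite_toSet
    have hWsub : W ⊆ T := by
      intro w hw
      rw [hWdef] at hw
      simp only [Finset.coe_union, Set.mem_union, Finset.coe_image, Set.mem_image,
        Finset.mem_coe] at hw
      rcases hw with ⟨e, he, rfl⟩ | ⟨e, he, rfl⟩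
      · rw [hT]
        exact Set.mem_biUnion he (left_mem_segment ℝ e.1 e.2)
      · rw [hT]
        exact Set.mem_biUnion he (right_mem_segment ℝ e.1 e.2)
    have hTsub : T ⊆ convexHull ℝ W := by
      rw [hT]
      intro w hw
      simp only [Set.mem_iUnion] at hw
      obtain ⟨e, he, hseg⟩ := hw
      have h1 : e.1 ∈ W := by
        rw [hWdef]
        simp only [Finset.coe_union, Set.mem_union, Finset.coe_image, Set.mem_image,
          Finset.mem_coe]
        exact Or.inl ⟨e, he, rfl⟩
      have h2 : e.2 ∈ W := by
        rw [hWdef]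
        simp only [Finset.coe_union, Set.mem_union, Finset.coe_image, Set.mem_image,
          Finset.mem_coe]
        exact Or.inr ⟨e, he, rfl⟩
      exact segment_subset_convexHull h1 h2 hseg
    have heq : convexHull ℝ T = convexHull ℝ W := by
      apply Set.Subset.antisymm
      · exact convexHull_min hTsub (convex_convexHull ℝ W)
      · exact convexHull_mono hWsub
    rw [heq]
    exact Set.Finite.isCompact_convexHull ℝ hWfin
  have hQSc : IsCompact (convexHull ℝ S) := hullcomp S ES hS
  have hQRc : IsCompact (convexHull ℝ R) := hullcomp R ER hR
  rcases meet R S hRcompact hScompact hRconn.isPreconnected hSconn.isPreconnected hinter with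
    h1 | h2
  · rcases core R S hRconn.isPreconnected hScompact hSconn.isPreconnected hQSc hRS h1 with
      hi | hiii
    · exact Or.inl hi
    · exact Or.inr (Or.inr (Or.inl hiii))
  · rcases core S R hSconn.isPreconnected hRcompact hRconn.isPreconnected hQRc hRS.symm h2 with
      hii | hiv
    · exact Or.inr (Or.inl hii)
    · exact Or.inr (Or.inr (Or.inr hiv))
end

section
/- Let S be a connected subset of ℝ², let p ∈ ℝ², and let v ∈ ℝ² be nonzero. If the line ℓ = { p + t • v : t ∈ ℝ } intersects convexHull ℝ S, then ℓ intersects S. Consequently, a line intersects the convex hull of a connected set if and only if it intersects the set itself. -/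
theorem line_hits_convexHull_iff_hits_connected_set
    (S : Set (ℝ × ℝ)) (hS : IsConnected S)
    (p v : ℝ × ℝ) (hv : v ≠ 0) :
    ({x : ℝ × ℝ | ∃ t : ℝ, x = p + t • v} ∩ convexHull ℝ S).Nonempty ↔
    ({x : ℝ × ℝ | ∃ t : ℝ, x = p + t • v} ∩ S).Nonempty := by
  -- linear functional vanishing in direction v
  set f : (ℝ × ℝ) →ₗ[ℝ] ℝ :=
    { toFun := fun x => x.1 * v.2 - x.2 * v.1
      map_add' := by intro a b; simp [Prod.fst_add, Prod.snd_add]; ring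
      map_smul' := by intro c a; simp [Prod.smul_fst, Prod.smul_snd]; ring } with hf
  have hmem : ∀ x : ℝ × ℝ, (∃ t : ℝ, x = p + t • v) ↔ f x = f p := by
    intro x
    constructor
    · rintro ⟨t, rfl⟩
      simp [hf, Prod.fst_add, Prod.snd_add, Prod.smul_fst, Prod.smul_snd, smul_eq_mul]
      ring
    · intro h
      simp only [hf, LinearMap.coe_mk, AddHom.coe_mk] at h
      by_cases h1 : v.1 ≠ 0
      · refine ⟨(x.1 - p.1) / v.1, ?_⟩
        have hx2 : x.2 = p.2 + (x.1 - p.1) / v.1 * v.2 := by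
          field_simp
          nlinarith [h]
        ext
        · simp [Prod.fst_add, Prod.smul_fst, smul_eq_mul]
          field_simp
          ring
        · simpa [Prod.snd_add, Prod.smul_snd, smul_eq_mul] using hx2
      · push_neg at h1
        have h2 : v.2 ≠ 0 := by
          intro h2; exact hv (Prod.ext h1 h2)
        refine ⟨(x.2 - p.2) / v.2, ?_⟩
        have hx1 : x.1 = p.1 + (x.2 - p.2) / v.2 * v.1 := by
          field_simp
          nlinarith [h]
        ext
        · simpa [Prod.fst_add, Prod.smul_fst, smul_eq_mul] using hx1
        · simp [Prod.snd_add, Prod.smul_snd, smul_eq_mul]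
          field_simp
          ring
  have hcont : Continuous f := by
    simp only [hf, LinearMap.coe_mk, AddHom.coe_mk]
    fun_prop
  constructor
  · rintro ⟨x, hx, hxh⟩
    have hfx : f x = f p := (hmem x).1 hx
    -- f '' S is connected in ℝ, hence convex
    have hconn : IsConnected (f '' S) := hS.image f hcont.continuousOn
    have hconv : Convex ℝ (f '' S) := hconn.isPreconnected.ordConnected.convex
    have : f x ∈ f '' S := by
      have h1 : f x ∈ f '' (convexHull ℝ S) := ⟨x, hxh, rfl⟩
      rwa [f.image_convexHull, hconv.convexHull_eq] at h1
    obtain ⟨s, hs, hfs⟩ := this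
    exact ⟨s, (hmem s).2 (by rw [hfs, hfx]), hs⟩
  · rintro ⟨x, hx, hxS⟩
    exact ⟨x, hx, subset_convexHull ℝ S hxS⟩
end

section
/- Let T₁, …, T_m be nonempty connected subsets of ℝ² and let p ∈ ℝ². Then p belongs to the coverage of {T₁, …, T_m} if and only if p belongs to the coverage of {convexHull ℝ T₁, …, convexHull ℝ T_m}; that is, (for every nonzero v ∈ ℝ² there exist an index i and t ∈ ℝ with p + t • v ∈ Tᵢ) if and only if (for every nonzero v ∈ ℝ² there exist an index i and t ∈ ℝ with p + t • v ∈ convexHull ℝ Tᵢ). -/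
theorem coverage_eq_coverage_of_hulls
    (m : ℕ) (T : Fin m → Set (ℝ × ℝ))
    (hTne : ∀ i, (T i).Nonempty) (hTconn : ∀ i, IsConnected (T i))
    (p : ℝ × ℝ) :
    (∀ v : ℝ × ℝ, v ≠ 0 → ∃ (i : Fin m) (t : ℝ), p + t • v ∈ T i) ↔
    (∀ v : ℝ × ℝ, v ≠ 0 → ∃ (i : Fin m) (t : ℝ), p + t • v ∈ convexHull ℝ (T i)) := by
  constructor
  · intro h v hv
    obtain ⟨i, t, ht⟩ := h v hv
    exact ⟨i, t, subset_convexHull ℝ _ ht⟩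
  · intro h v hv
    by_contra hc
    push_neg at hc
    obtain ⟨i, t, hit⟩ := h v hv
    set g : ℝ × ℝ → ℝ := fun x => (x.1 - p.1) * v.2 - (x.2 - p.2) * v.1 with hg
    have hgcont : Continuous g := by fun_prop
    have hgline : ∀ t : ℝ, g (p + t • v) = 0 := by
      intro s
      simp only [hg, Prod.fst_add, Prod.snd_add, Prod.smul_fst, Prod.smul_snd, smul_eq_mul]
      ring
    -- g is nonzero on T i
    have hgz : ∀ x ∈ T i, g x ≠ 0 := by
      intro x hx hx0
      have hv' : v.1 ≠ 0 ∨ v.2 ≠ 0 := by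
        by_contra hvv
        push_neg at hvv
        exact hv (Prod.ext hvv.1 hvv.2)
      rcases hv' with h1 | h2
      · have : p + ((x.1 - p.1) / v.1) • v = x := by
          have h2' : (x.1 - p.1) * v.2 = (x.2 - p.2) * v.1 := by
            simp only [hg] at hx0; linarith
          apply Prod.ext
          · simp only [Prod.fst_add, Prod.smul_fst, smul_eq_mul]
            field_simp
            ring
          · simp only [Prod.snd_add, Prod.smul_snd, smul_eq_mul]
            field_simp
            nlinarith [h2']
        exact hc i _ (this ▸ hx)
      · have : p + ((x.2 - p.2) / v.2) • v = x := by
          have h2' : (x.1 - p.1) * v.2 = (x.2 - p.2) * v.1 := by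
            simp only [hg] at hx0; linarith
          apply Prod.ext
          · simp only [Prod.fst_add, Prod.smul_fst, smul_eq_mul]
            field_simp
            nlinarith [h2']
          · simp only [Prod.snd_add, Prod.smul_snd, smul_eq_mul]
            field_simp
            ring
        exact hc i _ (this ▸ hx)
    -- affinity of g on convex combinations
    have haff : ∀ (x y : ℝ × ℝ) (a b : ℝ), a + b = 1 →
        g (a • x + b • y) = a * g x + b * g y := by
      intro x y a b hab
      simp only [hg, Prod.fst_add, Prod.snd_add, Prod.smul_fst, Prod.smul_snd, smul_eq_mul]
      linear_combination (p.1 * v.2 - p.2 * v.1) * hab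
    -- sign is constant on T i
    obtain ⟨x₀, hx₀⟩ := hTne i
    have himg : IsPreconnected (g '' T i) :=
      ((hTconn i).image g hgcont.continuousOn).isPreconnected
    have hord : (g '' T i).OrdConnected := himg.ordConnected
    have hzero_not : (0 : ℝ) ∉ g '' T i := by
      rintro ⟨x, hx, hx0⟩
      exact hgz x hx hx0
    have hsign : (∀ x ∈ T i, 0 < g x) ∨ (∀ x ∈ T i, g x < 0) := by
      rcases (hgz x₀ hx₀).lt_or_gt with h0 | h0
      · right
        intro x hx
        rcases (hgz x hx).lt_or_gt with h1 | h1
        · exact h1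
        · exact absurd (hord.out ⟨x₀, hx₀, rfl⟩ ⟨x, hx, rfl⟩ ⟨h0.le, h1.le⟩) hzero_not
      · left
        intro x hx
        rcases (hgz x hx).lt_or_gt with h1 | h1
        · exact absurd (hord.out ⟨x, hx, rfl⟩ ⟨x₀, hx₀, rfl⟩ ⟨h1.le, h0.le⟩) hzero_not
        · exact h1
    rcases hsign with hpos | hneg
    · have hconv : Convex ℝ {x : ℝ × ℝ | 0 < g x} := by
        intro x hx y hy a b ha hb hab
        have := haff x y a b hab
        simp only [Set.mem_setOf_eq] at hx hy ⊢
        rw [this]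
        rcases ha.lt_or_eq with ha' | ha'
        · linarith [mul_pos ha' hx, mul_nonneg hb hy.le]
        · have hb1 : b = 1 := by linarith
          rw [← ha', hb1]; simpa using hy
      have hsub : convexHull ℝ (T i) ⊆ {x : ℝ × ℝ | 0 < g x} :=
        convexHull_min (fun x hx => hpos x hx) hconv
      have := hsub hit
      simp only [Set.mem_setOf_eq, hgline t] at this
      exact lt_irrefl 0 this
    · have hconv : Convex ℝ {x : ℝ × ℝ | g x < 0} := by
        intro x hx y hy a b ha hb hab
        have := haff x y a b hab
        simp only [Set.mem_setOf_eq] at hx hy ⊢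
        rw [this]
        rcases ha.lt_or_eq with ha' | ha'
        · have h1 : a * g x < 0 := mul_neg_of_pos_of_neg ha' hx
          have h2 : b * g y ≤ 0 := mul_nonpos_of_nonneg_of_nonpos hb hy.le
          linarith
        · have hb1 : b = 1 := by linarith
          rw [← ha', hb1]; simpa using hy
      have hsub : convexHull ℝ (T i) ⊆ {x : ℝ × ℝ | g x < 0} :=
        convexHull_min (fun x hx => hneg x hx) hconv
      have := hsub hit
      simp only [Set.mem_setOf_eq, hgline t] at this
      exact lt_irrefl 0 this
end

section
/- Let A and B be subsets of ℝ² with (convexHull ℝ A) ∩ (convexHull ℝ B) ≠ ∅, let p ∈ ℝ², and let v ∈ ℝ² be nonzero. Then the line ℓ = { p + t • v : t ∈ ℝ } intersects convexHull ℝ (A ∪ B) if and only if ℓ intersects convexHull ℝ A or ℓ intersects convexHull ℝ B. Consequently, if two convex hulls overlap, replacing them by the convex hull of their union does not change the coverage. -/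
private def lf (p v y : ℝ × ℝ) : ℝ := v.1 * (y.2 - p.2) - v.2 * (y.1 - p.1)

private lemma lf_mem_line {p v : ℝ × ℝ} (hv : v ≠ 0) (y : ℝ × ℝ) :
    y ∈ {x : ℝ × ℝ | ∃ t : ℝ, x = p + t • v} ↔ lf p v y = 0 := by
  constructor
  · rintro ⟨t, rfl⟩
    simp only [lf, Prod.fst_add, Prod.snd_add, Prod.smul_fst, Prod.smul_snd, smul_eq_mul]
    ring
  · intro h
    simp only [lf] at h
    by_cases h1 : v.1 = 0
    · have h2 : v.2 ≠ 0 := fun h2 => hv (Prod.ext h1 h2)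
      have hy1 : v.2 * (y.1 - p.1) = 0 := by
        rw [h1] at h; linarith
      have hy1' : y.1 = p.1 := by
        rcases mul_eq_zero.1 hy1 with h' | h'
        · exact absurd h' h2
        · linarith
      refine ⟨(y.2 - p.2) / v.2, ?_⟩
      rw [Prod.ext_iff]
      constructor
      · simp [Prod.smul_fst, h1, hy1']
      · simp only [Prod.snd_add, Prod.smul_snd, smul_eq_mul]
        field_simp
        ring
    · refine ⟨(y.1 - p.1) / v.1, ?_⟩
      rw [Prod.ext_iff]
      constructor
      · simp only [Prod.fst_add, Prod.smul_fst, smul_eq_mul]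
        field_simp
        ring
      · simp only [Prod.snd_add, Prod.smul_snd, smul_eq_mul]
        field_simp
        nlinarith [h]

private lemma lf_affine (p v : ℝ × ℝ) (a b : ℝ × ℝ) {α β : ℝ} (hαβ : α + β = 1) :
    lf p v (α • a + β • b) = α * lf p v a + β * lf p v b := by
  simp only [lf, Prod.fst_add, Prod.snd_add, Prod.smul_fst, Prod.smul_snd, smul_eq_mul]
  linear_combination (v.1 * p.2 - v.2 * p.1) * hαβ

private lemma neg_combo {α β fa fb : ℝ} (hα : 0 ≤ α) (hβ : 0 ≤ β) (hαβ : α + β = 1)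
    (ha : fa < 0) (hb : fb < 0) : α * fa + β * fb < 0 := by
  rcases eq_or_lt_of_le hα with e | e
  · have hβ1 : β = 1 := by linarith
    rw [← e, hβ1]; linarith
  · nlinarith [mul_pos e (show (0:ℝ) < -fa by linarith),
      mul_nonneg hβ (show (0:ℝ) ≤ -fb by linarith)]

private lemma ivt_convex {S : Set (ℝ × ℝ)} (hS : Convex ℝ S) (p v : ℝ × ℝ)
    {a b : ℝ × ℝ} (ha : a ∈ S) (hb : b ∈ S) (h1 : lf p v a ≤ 0) (h2 : 0 ≤ lf p v b) :
    ∃ y ∈ S, lf p v y = 0 := by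
  rcases eq_or_lt_of_le h1 with h1' | h1'
  · exact ⟨a, ha, h1'⟩
  · have hd : 0 < lf p v b - lf p v a := by linarith
    set t : ℝ := (-lf p v a) / (lf p v b - lf p v a) with ht
    have ht0 : 0 ≤ t := div_nonneg (by linarith) hd.le
    have ht1 : t ≤ 1 := by
      rw [div_le_one hd]; linarith
    refine ⟨(1 - t) • a + t • b, hS ha hb (by linarith) ht0 (by ring), ?_⟩
    rw [lf_affine p v a b (by ring : (1 - t) + t = 1)]
    have hmul : t * (lf p v b - lf p v a) = -lf p v a := by
      rw [ht]; exact div_mul_cancel₀ _ hd.ne'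
    linear_combination hmul

theorem line_hits_hull_of_union_iff
    (A B : Set (ℝ × ℝ))
    (hAB : (convexHull ℝ A ∩ convexHull ℝ B).Nonempty)
    (p v : ℝ × ℝ) (hv : v ≠ 0) :
    ({x : ℝ × ℝ | ∃ t : ℝ, x = p + t • v} ∩ convexHull ℝ (A ∪ B)).Nonempty ↔
    ({x : ℝ × ℝ | ∃ t : ℝ, x = p + t • v} ∩ convexHull ℝ A).Nonempty ∨
    ({x : ℝ × ℝ | ∃ t : ℝ, x = p + t • v} ∩ convexHull ℝ B).Nonempty := by
  obtain ⟨c, hcA, hcB⟩ := hAB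
  have hAne : A.Nonempty := (convexHull_nonempty_iff).1 ⟨c, hcA⟩
  have hBne : B.Nonempty := (convexHull_nonempty_iff).1 ⟨c, hcB⟩
  constructor
  · rintro ⟨x, hxl, hxh⟩
    rw [convexHull_union hAne hBne, mem_convexJoin] at hxh
    obtain ⟨a, haA, b, hbB, hseg⟩ := hxh
    obtain ⟨α, β, hα, hβ, hαβ, hx⟩ := hseg
    have hfx : lf p v x = 0 := (lf_mem_line hv x).1 hxl
    have hcomb : α * lf p v a + β * lf p v b = 0 := by
      rw [← lf_affine p v a b hαβ, hx, hfx]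
    have key : (lf p v a ≤ 0 ∧ 0 ≤ lf p v b) ∨ (lf p v b ≤ 0 ∧ 0 ≤ lf p v a) := by
      rcases le_total (lf p v a) 0 with h | h <;> rcases le_total (lf p v b) 0 with h' | h'
      · rcases eq_or_lt_of_le h with e | l
        · exact Or.inr ⟨h', e.ge⟩
        rcases eq_or_lt_of_le h' with e | l'
        · exact Or.inl ⟨h, e.ge⟩
        exact absurd hcomb (neg_combo hα hβ hαβ l l').ne
      · exact Or.inl ⟨h, h'⟩
      · exact Or.inr ⟨h', h⟩
      · rcases eq_or_lt_of_le h with e | l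
        · exact Or.inl ⟨e.ge, h'⟩
        rcases eq_or_lt_of_le h' with e | l'
        · exact Or.inr ⟨e.ge, h⟩
        have := neg_combo hα hβ hαβ (show -lf p v a < 0 by linarith)
          (show -lf p v b < 0 by linarith)
        exfalso; nlinarith
    rcases key with ⟨ha0, hb0⟩ | ⟨hb0, ha0⟩
    · rcases le_total (lf p v c) 0 with hc | hc
      · right
        obtain ⟨y, hyS, hy0⟩ := ivt_convex (convex_convexHull ℝ B) p v hcB hbB hc hb0
        exact ⟨y, (lf_mem_line hv y).2 hy0, hyS⟩
      · left
        obtain ⟨y, hyS, hy0⟩ := ivt_convex (convex_convexHull ℝ A) p v haA hcA ha0 hc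
        exact ⟨y, (lf_mem_line hv y).2 hy0, hyS⟩
    · rcases le_total (lf p v c) 0 with hc | hc
      · left
        obtain ⟨y, hyS, hy0⟩ := ivt_convex (convex_convexHull ℝ A) p v hcA haA hc ha0
        exact ⟨y, (lf_mem_line hv y).2 hy0, hyS⟩
      · right
        obtain ⟨y, hyS, hy0⟩ := ivt_convex (convex_convexHull ℝ B) p v hbB hcB hb0 hc
        exact ⟨y, (lf_mem_line hv y).2 hy0, hyS⟩
  · rintro (⟨x, hxl, hxh⟩ | ⟨x, hxl, hxh⟩)
    · exact ⟨x, hxl, convexHull_mono Set.subset_union_left hxh⟩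
    · exact ⟨x, hxl, convexHull_mono Set.subset_union_right hxh⟩
end
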